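/- arXiv:2305.06982 — 4 statements merged into one kernel-verified Lean document; each statement's English description precedes it below -/
import Mathlib

section
/- (1-completeness of the halting-type problems) Let A ⊆ ℕ be an infinite computably enumerable set, let θ be a quasi-Gödel numbering of S_A, and set W^A_i = {w | ∃ x, θ i x = Part.some w}. Define K^A = {i | i ∈ W^A_i}, K^A_0 = {Nat.pair i x | x ∈ W^A_i}, K^A_1 = {Nat.pair i x | (θ i x).Dom}, and K^A_2 = {i | (θ i i).Dom}. Then each of K^A, K^A_0, K^A_1, K^A_2 is 1-complete: it is computably enumerable, and every computably enumerable set B ⊆ ℕ one-one reduces to it (there is an injective total computable f : ℕ → ℕ with n ∈ B ↔ f n ∈ the set, for all n). -/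
/-- `r : ℕ →. ℕ` is an initial-segment function for `A`: its domain is empty or
equals `{m | m < a}` for some `a ∈ A`. -/
def IsInitSeg (A : Set ℕ) (r : ℕ →. ℕ) : Prop :=
  {x : ℕ | (r x).Dom} = (∅ : Set ℕ) ∨ ∃ a ∈ A, {x : ℕ | (r x).Dom} = {m : ℕ | m < a}

/-- `SA A` is the class of unary partial functions that are either total computable
or initial-segment functions for `A`. -/
def SA (A : Set ℕ) : Set (ℕ →. ℕ) :=
  {r | (∃ f : ℕ → ℕ, Computable f ∧ ∀ x, r x = Part.some (f x)) ∨ IsInitSeg A r}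

/-- The extended graph of a unary partial function. -/
def graphE (q : ℕ →. ℕ) : Set ℕ :=
  {n | ∃ y, n = Nat.pair y 0} ∪ {n | ∃ x z, q x = Part.some z ∧ n = Nat.pair x (z + 1)}

/-- The graph of a unary partial function. -/
def pgraph (q : ℕ →. ℕ) : Set ℕ :=
  {n | ∃ x z, q x = Part.some z ∧ n = Nat.pair x z}

/-- Condition (QGN I): the extended graph of the universal function of `θ` is
enumerated by a total computable function. -/
def QGN1 (θ : ℕ → ℕ →. ℕ) : Prop :=
  ∃ h : ℕ → ℕ, Computable h ∧
    Set.range h = {n | ∃ w, n = Nat.pair w 0} ∪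
      {n | ∃ i x z, θ i x = Part.some z ∧ n = Nat.pair (Nat.pair i x) (z + 1)}

/-- Condition (QGN II). -/
def QGN2 (A : Set ℕ) (θ : ℕ → ℕ →. ℕ) : Prop :=
  ∀ k : ℕ → ℕ → ℕ, Computable₂ k →
    ∃ v : ℕ → ℕ, Computable v ∧
      ∀ i, ∀ r ∈ SA A, Set.range (k i) = graphE r → θ (v i) = r

/-- A quasi-Gödel numbering of `SA A`. -/
def QuasiGodel (A : Set ℕ) (θ : ℕ → ℕ →. ℕ) : Prop :=
  Set.range θ = SA A ∧ QGN1 θ ∧ QGN2 A θ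

/-- A set of naturals is computably enumerable. -/
def CEset (C : Set ℕ) : Prop :=
  C = ∅ ∨ ∃ g : ℕ → ℕ, Computable g ∧ C = Set.range g

/-- The standard Gödel numbering of the unary partial recursive functions. -/
def phi (i : ℕ) : ℕ →. ℕ :=
  Nat.Partrec.Code.eval (Denumerable.ofNat Nat.Partrec.Code i)

/-- `WA θ i` is the `i`-th computably enumerable set, the range of `θ i`. -/
def WA (θ : ℕ → ℕ →. ℕ) (i : ℕ) : Set ℕ := {w : ℕ | ∃ x, θ i x = Part.some w}

/-- A set of naturals is 1-complete: it is c.e. and every c.e. set one-one reduces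
to it. -/
def OneComplete (S : Set ℕ) : Prop :=
  CEset S ∧ ∀ B : Set ℕ, CEset B → OneOneReducible (· ∈ B) (· ∈ S)

open Function

lemma comp_ite {α σ : Type*} [Primcodable α] [Primcodable σ] {c : α → Prop} [DecidablePred c]
    {f g : α → σ} (hc : Computable fun a => decide (c a)) (hf : Computable f)
    (hg : Computable g) : Computable fun a => if c a then f a else g a :=
  (Computable.cond hc hf hg).of_eq fun a => by by_cases h : c a <;> simp [h]

lemma comp_nat_find {p : ℕ → ℕ → Bool} (hp : Computable₂ p) (H : ∀ n, ∃ c, p n c = true) :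
    Computable fun n => Nat.find (H n) := by
  have h1 : Partrec fun n => Nat.rfind fun c => (Part.some (p n c) : Part Bool) :=
    Partrec.rfind hp.partrec.to₂
  refine Partrec.of_eq_tot h1 fun n => ?_
  refine Nat.mem_rfind.2 ⟨?_, fun {m} hm => ?_⟩
  · rw [Part.mem_some_iff]; exact (Nat.find_spec (H n)).symm
  · rw [Part.mem_some_iff]
    exact ((Bool.not_eq_true _).mp (Nat.find_min (H n) hm)).symm

lemma exists_beta {A : Set ℕ} (hAinf : A.Infinite) (hAce : CEset A) :
    ∃ β : ℕ → ℕ, Computable β ∧ StrictMono β ∧ (∀ n, β n ∈ A) ∧ ∀ n, 0 < β n := by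
  obtain ⟨α₀, hα₀, hA⟩ : ∃ g : ℕ → ℕ, Computable g ∧ A = Set.range g := by
    rcases hAce with h | h
    · exact absurd h (by intro hh; exact hAinf.nonempty.ne_empty hh)
    · exact h
  have hub : ∀ p : ℕ, ∃ t, (decide (p < α₀ t)) = true := by
    intro p
    obtain ⟨b, hb, hpb⟩ := hAinf.exists_gt p
    rw [hA] at hb; obtain ⟨t, rfl⟩ := hb
    exact ⟨t, by simpa using hpb⟩
  set d : ℕ → ℕ := fun p => Nat.find (hub p) with hd
  have hdc : Computable d :=
    comp_nat_find ((Primrec.nat_lt.decide.to_comp).comp Computable.fst (hα₀.comp Computable.snd)).to₂ hub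
  set δ : ℕ → ℕ := fun p => α₀ (d p) with hδ
  have hδc : Computable δ := hα₀.comp hdc
  have hδgt : ∀ p, p < δ p := fun p => by
    have := Nat.find_spec (hub p); simpa [hδ, hd] using this
  have hδA : ∀ p, δ p ∈ A := fun p => hA ▸ ⟨d p, rfl⟩
  refine ⟨fun n => Nat.rec (δ 0) (fun _ ih => δ ih) n, ?_, ?_, ?_, ?_⟩
  · have := Computable.nat_rec (Computable.id)
      (Computable.const (δ 0) : Computable fun _ : ℕ => δ 0)
      ((hδc.comp (Computable.snd.comp Computable.snd)).to₂ :
        Computable₂ fun (_ : ℕ) (p : ℕ × ℕ) => δ p.2)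
    exact this.of_eq fun n => by induction n <;> simp_all
  · apply strictMono_nat_of_lt_succ
    intro n; exact hδgt _
  · intro n; induction n with
    | zero => exact hδA 0
    | succ m ih => exact hδA _
  · intro n; induction n with
    | zero => exact Nat.zero_lt_of_lt (hδgt 0)
    | succ m ih => exact Nat.zero_lt_of_lt (hδgt _)

lemma ce_rep {B : Set ℕ} (hB : CEset B) :
    ∃ g : ℕ → ℕ, Computable g ∧ ∀ n, n ∈ B ↔ ∃ u, g u = n + 1 := by
  rcases hB with rfl | ⟨g₀, hg₀, rfl⟩
  · exact ⟨fun _ => 0, Computable.const 0, fun n => by simp⟩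
  · refine ⟨fun u => g₀ u + 1, Computable.succ.comp hg₀, fun n => ?_⟩
    constructor
    · rintro ⟨u, rfl⟩; exact ⟨u, rfl⟩
    · rintro ⟨u, hu⟩; exact ⟨u, Nat.succ_injective hu⟩

lemma CEset_of {S : Set ℕ} {e : ℕ → Option ℕ} (he : Computable e) {n₀ : ℕ} (h₀ : n₀ ∈ S)
    (hsound : ∀ t n, e t = some n → n ∈ S) (hcompl : ∀ n ∈ S, ∃ t, e t = some n) :
    CEset S := by
  refine Or.inr ⟨fun t => (e t).getD n₀, Computable.option_getD he (Computable.const n₀), ?_⟩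
  ext n
  constructor
  · intro hn
    obtain ⟨t, ht⟩ := hcompl n hn
    exact ⟨t, by simp [ht]⟩
  · rintro ⟨t, rfl⟩
    cases ht : e t with
    | none => simpa [ht] using h₀
    | some m => simpa [ht] using hsound t m ht

lemma mem_SA_total {A : Set ℕ} {f : ℕ → ℕ} (hf : Computable f) :
    (fun y => Part.some (f y) : ℕ →. ℕ) ∈ SA A :=
  Or.inl ⟨f, hf, fun _ => rfl⟩

lemma mem_SA_seg {A : Set ℕ} {a : ℕ} (ha : a ∈ A) (c : ℕ → ℕ) :
    (fun m => if m < a then Part.some (c m) else Part.none : ℕ →. ℕ) ∈ SA A := by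
  refine Or.inr (Or.inr ⟨a, ha, ?_⟩)
  ext m
  by_cases h : m < a <;> simp [h]
/-- the total function: value `c` below `b`, then shifted identity. -/
def posf (b c y : ℕ) : ℕ := if y < b then c else y - b

/-- the members of the uniform family. -/
noncomputable def rfam (B : Set ℕ) (β : ℕ → ℕ) (n c : ℕ) : ℕ →. ℕ :=
  open Classical in
  if n ∈ B then (fun y => Part.some (posf (β n) c y))
  else fun y => if y < β n then Part.some c else Part.none

lemma rfam_pos {B : Set ℕ} {β : ℕ → ℕ} {n : ℕ} (hn : n ∈ B) (c : ℕ) :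
    rfam B β n c = fun y => Part.some (posf (β n) c y) := by
  unfold rfam; exact if_pos hn

lemma rfam_neg {B : Set ℕ} {β : ℕ → ℕ} {n : ℕ} (hn : n ∉ B) (c : ℕ) :
    rfam B β n c = fun y => if y < β n then Part.some c else Part.none := by
  unfold rfam; exact if_neg hn

/-- the uniform enumeration of the extended graphs of the family. -/
def kfam (g β : ℕ → ℕ) (p s : ℕ) : ℕ :=
  if s.unpair.1 = 0 then Nat.pair s.unpair.2 0
  else if s.unpair.1 = 1 then
    (if s.unpair.2 < β p.unpair.1 then Nat.pair s.unpair.2 (p.unpair.2 + 1) else Nat.pair 0 0)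
  else if g (s.unpair.1 - 2) = p.unpair.1 + 1 then
    Nat.pair s.unpair.2 (posf (β p.unpair.1) p.unpair.2 s.unpair.2 + 1)
  else Nat.pair 0 0

lemma kfam_computable {g β : ℕ → ℕ} (hg : Computable g) (hβ : Computable β) :
    Computable₂ (kfam g β) := by
  have u1 : Computable fun m : ℕ => m.unpair.1 := Computable.fst.comp Computable.unpair
  have u2 : Computable fun m : ℕ => m.unpair.2 := Computable.snd.comp Computable.unpair
  have pairC : Computable₂ Nat.pair := Primrec₂.natPair.to_comp
  -- components over α = ℕ × ℕ  (x.1 = p, x.2 = s)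
  have st : Computable fun x : ℕ × ℕ => x.2.unpair.1 := u1.comp Computable.snd
  have sy : Computable fun x : ℕ × ℕ => x.2.unpair.2 := u2.comp Computable.snd
  have pn : Computable fun x : ℕ × ℕ => x.1.unpair.1 := u1.comp Computable.fst
  have pc : Computable fun x : ℕ × ℕ => x.1.unpair.2 := u2.comp Computable.fst
  have βn : Computable fun x : ℕ × ℕ => β x.1.unpair.1 := hβ.comp pn
  have posC : Computable fun x : ℕ × ℕ => posf (β x.1.unpair.1) x.1.unpair.2 x.2.unpair.2 := by
    unfold posf
    exact comp_ite (Primrec.nat_lt.decide.to_comp.comp sy βn) pc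
      (Primrec.nat_sub.to_comp.comp sy βn)
  unfold kfam Computable₂
  apply comp_ite ((Primrec.eq (α := ℕ)).decide.to_comp.comp st (Computable.const 0))
    (pairC.comp sy (Computable.const 0))
  apply comp_ite ((Primrec.eq (α := ℕ)).decide.to_comp.comp st (Computable.const 1))
  · exact comp_ite (Primrec.nat_lt.decide.to_comp.comp sy βn)
      (pairC.comp sy (Computable.succ.comp pc)) (Computable.const (Nat.pair 0 0))
  · exact comp_ite
      ((Primrec.eq (α := ℕ)).decide.to_comp.comp
        (hg.comp (Primrec.nat_sub.to_comp.comp st (Computable.const 2)))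
        (Computable.succ.comp pn))
      (pairC.comp sy (Computable.succ.comp posC)) (Computable.const (Nat.pair 0 0))

lemma kfam_range {B : Set ℕ} {g β : ℕ → ℕ} (hg : ∀ m, m ∈ B ↔ ∃ u, g u = m + 1)
    (hβpos : ∀ m, 0 < β m) (n c : ℕ) :
    Set.range (kfam g β (Nat.pair n c)) = graphE (rfam B β n c) := by
  ext w
  simp only [Set.mem_range, graphE, Set.mem_union, Set.mem_setOf_eq]
  constructor
  · rintro ⟨s, rfl⟩
    unfold kfam
    simp only [Nat.unpair_pair]
    rcases eq_or_ne s.unpair.1 0 with h0 | h0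
    · rw [if_pos h0]; exact Or.inl ⟨s.unpair.2, rfl⟩
    rw [if_neg h0]
    rcases eq_or_ne s.unpair.1 1 with h1 | h1
    · rw [if_pos h1]
      by_cases hy : s.unpair.2 < β n
      · rw [if_pos hy]
        refine Or.inr ⟨s.unpair.2, c, ?_, rfl⟩
        by_cases hn : n ∈ B
        · rw [rfam_pos hn]; simp [posf, hy]
        · rw [rfam_neg hn]; simp [hy]
      · rw [if_neg hy]; exact Or.inl ⟨0, rfl⟩
    rw [if_neg h1]
    by_cases hgs : g (s.unpair.1 - 2) = n + 1
    · rw [if_pos hgs]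
      have hn : n ∈ B := (hg n).2 ⟨s.unpair.1 - 2, hgs⟩
      refine Or.inr ⟨s.unpair.2, posf (β n) c s.unpair.2, ?_, rfl⟩
      rw [rfam_pos hn]
    · rw [if_neg hgs]; exact Or.inl ⟨0, rfl⟩
  · rintro (⟨y, rfl⟩ | ⟨x, z, hxz, rfl⟩)
    · exact ⟨Nat.pair 0 y, by unfold kfam; simp⟩
    · by_cases hn : n ∈ B
      · rw [rfam_pos hn] at hxz
        have hz : z = posf (β n) c x := by
          have := Part.some_inj.mp hxz
          exact this.symm
        obtain ⟨u, hu⟩ := (hg n).1 hn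
        refine ⟨Nat.pair (u + 2) x, ?_⟩
        unfold kfam
        simp only [Nat.unpair_pair]
        rw [if_neg (by omega), if_neg (by omega)]
        simp [Nat.add_sub_cancel, hu, hz]
      · rw [rfam_neg hn] at hxz
        dsimp only at hxz
        by_cases hx : x < β n
        · rw [if_pos hx] at hxz
          have hz : z = c := (Part.some_inj.mp hxz).symm
          refine ⟨Nat.pair 1 x, ?_⟩
          unfold kfam
          simp only [Nat.unpair_pair]
          simp [hx, hz]
        · rw [if_neg hx] at hxz
          exact absurd hxz.symm (Part.some_ne_none z)


lemma pair_inj {a b c d : ℕ} (h : Nat.pair a b = Nat.pair c d) : a = c ∧ b = d := by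
  have h1 := congrArg (fun m => m.unpair.1) h
  have h2 := congrArg (fun m => m.unpair.2) h
  simp only [Nat.unpair_pair] at h1 h2
  exact ⟨h1, h2⟩

lemma key_reductions {A : Set ℕ} (hAinf : A.Infinite) (hAce : CEset A) {θ : ℕ → ℕ →. ℕ}
    (hθ : QuasiGodel A θ) {B : Set ℕ} (hB : CEset B) :
    OneOneReducible (· ∈ B) (· ∈ {i : ℕ | i ∈ WA θ i}) ∧
    OneOneReducible (· ∈ B) (· ∈ {n : ℕ | ∃ i x, x ∈ WA θ i ∧ n = Nat.pair i x}) ∧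
    OneOneReducible (· ∈ B) (· ∈ {n : ℕ | ∃ i x, (θ i x).Dom ∧ n = Nat.pair i x}) ∧
    OneOneReducible (· ∈ B) (· ∈ {i : ℕ | (θ i i).Dom}) := by
  obtain ⟨g, hgc, hg⟩ := ce_rep hB
  obtain ⟨β, hβc, hβmono, hβA, hβpos⟩ := exists_beta hAinf hAce
  have pairC : Computable₂ Nat.pair := Primrec₂.natPair.to_comp
  have hrSA : ∀ n c, rfam B β n c ∈ SA A := by
    intro n c
    by_cases hn : n ∈ B
    · rw [rfam_pos hn]
      refine mem_SA_total ?_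
      unfold posf
      exact comp_ite (Primrec.nat_lt.decide.to_comp.comp Computable.id (Computable.const _))
        (Computable.const c) (Primrec.nat_sub.to_comp.comp Computable.id (Computable.const _))
    · rw [rfam_neg hn]
      exact mem_SA_seg (hβA n) (fun _ => c)
  obtain ⟨v, hvc, hv⟩ := hθ.2.2 _ (kfam_computable hgc hβc)
  have hvθ : ∀ n c, θ (v (Nat.pair n c)) = rfam B β n c := fun n c =>
    hv _ _ (hrSA n c) (kfam_range hg hβpos n c)
  -- the family member determines the first parameter
  have E1 : ∀ n c m d, rfam B β n c = rfam B β m d → n = m := by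
    intro n c m d hE
    by_cases hn : n ∈ B <;> by_cases hm : m ∈ B
    · rw [rfam_pos hn, rfam_pos hm] at hE
      have := congrFun hE (β n + β m)
      try dsimp only at this
      rw [Part.some_inj] at this
      unfold posf at this
      rw [if_neg (by omega), if_neg (by omega)] at this
      exact hβmono.injective (by omega)
    · rw [rfam_pos hn, rfam_neg hm] at hE
      have := congrFun hE (β m)
      try dsimp only at this
      rw [if_neg (lt_irrefl _)] at this
      exact absurd this (Part.some_ne_none _)
    · rw [rfam_neg hn, rfam_pos hm] at hE
      have := congrFun hE (β n)
      try dsimp only at this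
      rw [if_neg (lt_irrefl _)] at this
      exact absurd this.symm (Part.some_ne_none _)
    · rw [rfam_neg hn, rfam_neg hm] at hE
      have h1 := congrFun hE (β n)
      have h2 := congrFun hE (β m)
      try dsimp only at h1 h2
      have hnm : ¬ β n < β m := by
        intro hlt
        rw [if_neg (lt_irrefl _), if_pos hlt] at h1
        exact (Part.some_ne_none d) h1.symm
      have hmn : ¬ β m < β n := by
        intro hlt
        rw [if_pos hlt, if_neg (lt_irrefl _)] at h2
        exact (Part.some_ne_none c) h2
      exact hβmono.injective (by omega)
  -- the family member determines the second parameter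
  have E2 : ∀ n c d, rfam B β n c = rfam B β n d → c = d := by
    intro n c d hE
    by_cases hn : n ∈ B
    · rw [rfam_pos hn, rfam_pos hn] at hE
      have := congrFun hE 0
      try dsimp only at this
      rw [Part.some_inj] at this
      unfold posf at this
      rwa [if_pos (hβpos n), if_pos (hβpos n)] at this
    · rw [rfam_neg hn, rfam_neg hn] at hE
      have := congrFun hE 0
      try dsimp only at this
      rw [if_pos (hβpos n), if_pos (hβpos n)] at this
      exact Part.some_inj.mp this
  have hv0 : Computable fun n => v (Nat.pair n 0) :=
    hvc.comp (pairC.comp Computable.id (Computable.const 0))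
  -- ### reduction to K₁
  have red1 : OneOneReducible (· ∈ B) (· ∈ {n : ℕ | ∃ i x, (θ i x).Dom ∧ n = Nat.pair i x}) := by
    refine ⟨fun n => Nat.pair (v (Nat.pair n 0)) (β n), pairC.comp hv0 hβc, ?_, ?_⟩
    · intro n m hnm
      obtain ⟨h1, _⟩ := pair_inj hnm
      exact E1 n 0 m 0 (by rw [← hvθ n 0, ← hvθ m 0, h1])
    · intro n
      simp only [Set.mem_setOf_eq]
      constructor
      · intro hn
        refine ⟨v (Nat.pair n 0), β n, ?_, rfl⟩
        rw [hvθ n 0, rfam_pos hn]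
        trivial
      · rintro ⟨i, x, hdom, hpair⟩
        obtain ⟨h1, h2⟩ := pair_inj hpair
        by_contra hn
        rw [← h1, ← h2, hvθ n 0, rfam_neg hn] at hdom
        dsimp only at hdom
        rw [if_neg (lt_irrefl _)] at hdom
        exact hdom
  -- ### reduction to K₀
  have red2 : OneOneReducible (· ∈ B) (· ∈ {n : ℕ | ∃ i x, x ∈ WA θ i ∧ n = Nat.pair i x}) := by
    refine ⟨fun n => Nat.pair (v (Nat.pair n 0)) 1, pairC.comp hv0 (Computable.const 1), ?_, ?_⟩
    · intro n m hnm
      obtain ⟨h1, _⟩ := pair_inj hnm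
      exact E1 n 0 m 0 (by rw [← hvθ n 0, ← hvθ m 0, h1])
    · intro n
      simp only [Set.mem_setOf_eq]
      constructor
      · intro hn
        refine ⟨v (Nat.pair n 0), 1, ⟨β n + 1, ?_⟩, rfl⟩
        rw [hvθ n 0, rfam_pos hn]
        dsimp only
        rw [Part.some_inj]
        unfold posf
        rw [if_neg (by omega)]
        omega
      · rintro ⟨i, x, ⟨y, hy⟩, hpair⟩
        obtain ⟨h1, h2⟩ := pair_inj hpair
        by_contra hn
        rw [← h1, hvθ n 0, rfam_neg hn] at hy
        dsimp only at hy
        by_cases hyb : y < β n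
        · rw [if_pos hyb] at hy
          rw [Part.some_inj] at hy
          omega
        · rw [if_neg hyb] at hy
          exact Part.some_ne_none x hy.symm
  -- ### reduction to K₂
  have P2 : ∀ n, ∃ cc, (fun n c => if β n ≤ v (Nat.pair n c) then true else false) n cc = true := by
    intro n
    by_contra hfix
    push_neg at hfix
    have hall : ∀ c, v (Nat.pair n c) < β n := by
      intro c
      have := hfix c
      by_cases hle : β n ≤ v (Nat.pair n c)
      · rw [if_pos hle] at this
        exact absurd rfl this
      · omega
    have hinj : Function.Injective fun c => v (Nat.pair n c) := by
      intro c d hcd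
      exact E2 n c d (by rw [← hvθ n c, ← hvθ n d]; exact congrArg θ hcd)
    have := Set.infinite_of_injective_forall_mem (s := Set.Iio (β n)) hinj
      (fun c => hall c)
    exact this (Set.finite_Iio _)
  have hc2comp : Computable fun n => Nat.find (P2 n) := by
    apply comp_nat_find
    exact (comp_ite
      (Primrec.nat_le.decide.to_comp.comp (hβc.comp Computable.fst)
        (hvc.comp (pairC.comp Computable.fst Computable.snd)))
      (Computable.const true) (Computable.const false)).to₂
  have hc2spec : ∀ n, β n ≤ v (Nat.pair n (Nat.find (P2 n))) := by
    intro n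
    simpa using Nat.find_spec (P2 n)
  have red4 : OneOneReducible (· ∈ B) (· ∈ {i : ℕ | (θ i i).Dom}) := by
    refine ⟨fun n => v (Nat.pair n (Nat.find (P2 n))),
      hvc.comp (pairC.comp Computable.id hc2comp), ?_, ?_⟩
    · intro n m hnm
      exact E1 n _ m _ (by rw [← hvθ, ← hvθ]; exact congrArg θ hnm)
    · intro n
      simp only [Set.mem_setOf_eq]
      rw [hvθ n (Nat.find (P2 n))]
      by_cases hn : n ∈ B
      · rw [rfam_pos hn]
        simp [hn]
      · rw [rfam_neg hn]
        dsimp only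
        rw [if_neg (by have := hc2spec n; omega)]
        simp [hn]
  -- ### reduction to K
  have P3 : ∀ n, ∃ cc,
      (fun n c => if v (Nat.pair n c) = c then false else true) n cc = true := by
    intro n
    by_contra hfix
    push_neg at hfix
    have hall : ∀ c, v (Nat.pair n c) = c := by
      intro c
      have := hfix c
      by_cases heq : v (Nat.pair n c) = c
      · exact heq
      · rw [if_neg heq] at this
        exact absurd rfl this
    have hconst : (fun _ => Part.some 0 : ℕ →. ℕ) ∈ Set.range θ := by
      rw [hθ.1]; exact mem_SA_total (Computable.const 0)
    obtain ⟨j, hj⟩ := hconst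
    have hj' : rfam B β n j = fun _ => Part.some 0 := by
      have h' := hvθ n j
      rw [hall j, hj] at h'
      exact h'.symm
    by_cases hn : n ∈ B
    · rw [rfam_pos hn] at hj'
      have := congrFun hj' (β n + 1)
      try dsimp only at this
      rw [Part.some_inj] at this
      unfold posf at this
      rw [if_neg (by omega)] at this
      omega
    · rw [rfam_neg hn] at hj'
      have := congrFun hj' (β n)
      try dsimp only at this
      rw [if_neg (lt_irrefl _)] at this
      exact Part.some_ne_none 0 this.symm
  have hc3comp : Computable fun n => Nat.find (P3 n) := by
    apply comp_nat_find
    exact (comp_ite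
      ((Primrec.eq (α := ℕ)).decide.to_comp.comp (hvc.comp (pairC.comp Computable.fst Computable.snd))
        Computable.snd)
      (Computable.const false) (Computable.const true)).to₂
  have hc3spec : ∀ n, v (Nat.pair n (Nat.find (P3 n))) ≠ Nat.find (P3 n) := by
    intro n
    simpa using Nat.find_spec (P3 n)
  have red0 : OneOneReducible (· ∈ B) (· ∈ {i : ℕ | i ∈ WA θ i}) := by
    refine ⟨fun n => v (Nat.pair n (Nat.find (P3 n))),
      hvc.comp (pairC.comp Computable.id hc3comp), ?_, ?_⟩
    · intro n m hnm
      exact E1 n _ m _ (by rw [← hvθ, ← hvθ]; exact congrArg θ hnm)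
    · intro n
      simp only [Set.mem_setOf_eq, WA]
      constructor
      · intro hn
        refine ⟨β n + v (Nat.pair n (Nat.find (P3 n))), ?_⟩
        rw [hvθ, rfam_pos hn]
        dsimp only
        rw [Part.some_inj]
        unfold posf
        rw [if_neg (by omega)]
        omega
      · rintro ⟨x, hx⟩
        by_contra hn
        rw [hvθ, rfam_neg hn] at hx
        dsimp only at hx
        by_cases hxb : x < β n
        · rw [if_pos hxb] at hx
          rw [Part.some_inj] at hx
          exact (hc3spec n) hx.symm
        · rw [if_neg hxb] at hx
          exact Part.some_ne_none _ hx.symm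
  exact ⟨red0, red2, red1, red4⟩

lemma key_ce {A : Set ℕ} {θ : ℕ → ℕ →. ℕ} (hθ : QuasiGodel A θ) :
    CEset {i : ℕ | i ∈ WA θ i} ∧
    CEset {n : ℕ | ∃ i x, x ∈ WA θ i ∧ n = Nat.pair i x} ∧
    CEset {n : ℕ | ∃ i x, (θ i x).Dom ∧ n = Nat.pair i x} ∧
    CEset {i : ℕ | (θ i i).Dom} := by
  obtain ⟨h, hhc, hhr⟩ := hθ.2.1
  have F3a : ∀ i x z, θ i x = Part.some z → ∃ t, h t = Nat.pair (Nat.pair i x) (z + 1) := by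
    intro i x z hz
    have : Nat.pair (Nat.pair i x) (z + 1) ∈ Set.range h := by
      rw [hhr]; exact Or.inr ⟨i, x, z, hz, rfl⟩
    exact this
  have F3b : ∀ t, (h t).unpair.2 ≠ 0 →
      θ (h t).unpair.1.unpair.1 (h t).unpair.1.unpair.2 = Part.some ((h t).unpair.2 - 1) := by
    intro t ht
    have hmem : h t ∈ Set.range h := ⟨t, rfl⟩
    rw [hhr] at hmem
    rcases hmem with ⟨w, hw⟩ | ⟨i, x, z, hz, hw⟩
    · rw [hw] at ht; simp [Nat.unpair_pair] at ht
    · rw [hw]; simp only [Nat.unpair_pair, Nat.add_sub_cancel]; exact hz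
  obtain ⟨i₀, hi₀⟩ : ∃ i₀, θ i₀ = fun _ => Part.some 0 := by
    have : (fun _ => Part.some 0 : ℕ →. ℕ) ∈ Set.range θ := by
      rw [hθ.1]; exact mem_SA_total (Computable.const 0)
    exact this
  obtain ⟨j₀, hj₀⟩ : ∃ j₀, θ j₀ = fun x => Part.some x := by
    have : (fun x => Part.some x : ℕ →. ℕ) ∈ Set.range θ := by
      rw [hθ.1]; exact mem_SA_total Computable.id
    exact this
  have u1 : Computable fun m : ℕ => m.unpair.1 := Computable.fst.comp Computable.unpair
  have u2 : Computable fun m : ℕ => m.unpair.2 := Computable.snd.comp Computable.unpair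
  have pairC : Computable₂ Nat.pair := Primrec₂.natPair.to_comp
  have ca : Computable fun t => (h t).unpair.2 := u2.comp hhc
  have cb : Computable fun t => (h t).unpair.1.unpair.1 := u1.comp (u1.comp hhc)
  have cc : Computable fun t => (h t).unpair.1.unpair.2 := u2.comp (u1.comp hhc)
  have cu : Computable fun t => (h t).unpair.1 := u1.comp hhc
  refine ⟨?_, ?_, ?_, ?_⟩
  -- K
  · refine CEset_of (e := fun t => if (h t).unpair.2 = (h t).unpair.1.unpair.1 + 1
        then some ((h t).unpair.1.unpair.1) else none)
      (comp_ite ((Primrec.eq (α := ℕ)).decide.to_comp.comp ca (Computable.succ.comp cb))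
        (Computable.option_some.comp cb) (Computable.const none))
      (n₀ := j₀) ?_ ?_ ?_
    · exact ⟨j₀, by rw [hj₀]⟩
    · intro t n he
      by_cases hcond : (h t).unpair.2 = (h t).unpair.1.unpair.1 + 1
      · rw [if_pos hcond] at he
        have hn : n = (h t).unpair.1.unpair.1 := (Option.some_inj.mp he).symm
        have hne : (h t).unpair.2 ≠ 0 := by omega
        have := F3b t hne
        rw [hcond] at this
        simp only [Nat.add_sub_cancel] at this
        subst hn
        exact ⟨(h t).unpair.1.unpair.2, this⟩
      · rw [if_neg hcond] at he; exact absurd he (by simp)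
    · rintro n hn
      obtain ⟨x, hx⟩ := hn
      obtain ⟨t, ht⟩ := F3a n x n hx
      refine ⟨t, ?_⟩
      rw [ht]
      simp [Nat.unpair_pair]
  -- K₀
  · refine CEset_of (e := fun t => if (h t).unpair.2 = 0 then none
        else some (Nat.pair (h t).unpair.1.unpair.1 ((h t).unpair.2 - 1)))
      (comp_ite ((Primrec.eq (α := ℕ)).decide.to_comp.comp ca (Computable.const 0))
        (Computable.const none)
        (Computable.option_some.comp (pairC.comp cb
          (Primrec.nat_sub.to_comp.comp ca (Computable.const 1)))))
      (n₀ := Nat.pair i₀ 0) ?_ ?_ ?_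
    · exact ⟨i₀, 0, ⟨0, by rw [hi₀]⟩, rfl⟩
    · intro t n he
      by_cases hcond : (h t).unpair.2 = 0
      · rw [if_pos hcond] at he; exact absurd he (by simp)
      · rw [if_neg hcond] at he
        have := F3b t hcond
        exact ⟨(h t).unpair.1.unpair.1, (h t).unpair.2 - 1,
          ⟨(h t).unpair.1.unpair.2, this⟩, (Option.some_inj.mp he).symm⟩
    · rintro n ⟨i, x, ⟨y, hy⟩, rfl⟩
      obtain ⟨t, ht⟩ := F3a i y x hy
      refine ⟨t, ?_⟩
      rw [ht]
      simp [Nat.unpair_pair]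
  -- K₁
  · refine CEset_of (e := fun t => if (h t).unpair.2 = 0 then none
        else some ((h t).unpair.1))
      (comp_ite ((Primrec.eq (α := ℕ)).decide.to_comp.comp ca (Computable.const 0))
        (Computable.const none) (Computable.option_some.comp cu))
      (n₀ := Nat.pair i₀ 0) ?_ ?_ ?_
    · refine ⟨i₀, 0, ?_, rfl⟩
      rw [hi₀]; trivial
    · intro t n he
      by_cases hcond : (h t).unpair.2 = 0
      · rw [if_pos hcond] at he; exact absurd he (by simp)
      · rw [if_neg hcond] at he
        have := F3b t hcond
        refine ⟨(h t).unpair.1.unpair.1, (h t).unpair.1.unpair.2, ?_, ?_⟩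
        · rw [this]; trivial
        · rw [← Option.some_inj.mp he, Nat.pair_unpair]
    · rintro n ⟨i, x, hdom, rfl⟩
      obtain ⟨z, hz⟩ := Part.dom_iff_mem.mp hdom
      obtain ⟨t, ht⟩ := F3a i x z (Part.eq_some_iff.mpr hz)
      refine ⟨t, ?_⟩
      rw [ht]
      simp [Nat.unpair_pair]
  -- K₂
  · refine CEset_of (e := fun t => if (h t).unpair.1.unpair.1 = (h t).unpair.1.unpair.2
        then (if (h t).unpair.2 = 0 then none else some ((h t).unpair.1.unpair.1)) else none)
      (comp_ite ((Primrec.eq (α := ℕ)).decide.to_comp.comp cb cc)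
        (comp_ite ((Primrec.eq (α := ℕ)).decide.to_comp.comp ca (Computable.const 0))
          (Computable.const none) (Computable.option_some.comp cb))
        (Computable.const none))
      (n₀ := j₀) ?_ ?_ ?_
    · show (θ j₀ j₀).Dom
      rw [hj₀]; trivial
    · intro t n he
      by_cases hcond : (h t).unpair.1.unpair.1 = (h t).unpair.1.unpair.2
      · rw [if_pos hcond] at he
        by_cases hz : (h t).unpair.2 = 0
        · rw [if_pos hz] at he; exact absurd he (by simp)
        · rw [if_neg hz] at he
          have := F3b t hz
          rw [← Option.some_inj.mp he]
          show (θ _ _).Dom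
          rw [← hcond] at this
          rw [this]; trivial
      · rw [if_neg hcond] at he; exact absurd he (by simp)
    · intro n hn
      have hdom : (θ n n).Dom := hn
      obtain ⟨z, hz⟩ := Part.dom_iff_mem.mp hdom
      obtain ⟨t, ht⟩ := F3a n n z (Part.eq_some_iff.mpr hz)
      refine ⟨t, ?_⟩
      rw [ht]
      simp [Nat.unpair_pair]


/-- 1-completeness of the halting-type problems `K^A`, `K^A_0`, `K^A_1`, `K^A_2`. -/
theorem halting_problems_one_complete (A : Set ℕ) (hAinf : A.Infinite) (hAce : CEset A)
    (θ : ℕ → ℕ →. ℕ) (hθ : QuasiGodel A θ) :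
    OneComplete {i : ℕ | i ∈ WA θ i} ∧
    OneComplete {n : ℕ | ∃ i x, x ∈ WA θ i ∧ n = Nat.pair i x} ∧
    OneComplete {n : ℕ | ∃ i x, (θ i x).Dom ∧ n = Nat.pair i x} ∧
    OneComplete {i : ℕ | (θ i i).Dom} := by
  obtain ⟨ce0, ce2, ce1, ce4⟩ := key_ce hθ
  exact ⟨⟨ce0, fun B hB => (key_reductions hAinf hAce hθ hB).1⟩,
    ⟨ce2, fun B hB => (key_reductions hAinf hAce hθ hB).2.1⟩,
    ⟨ce1, fun B hB => (key_reductions hAinf hAce hθ hB).2.2.1⟩,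
    ⟨ce4, fun B hB => (key_reductions hAinf hAce hθ hB).2.2.2⟩⟩
end

section
/- (Position in the arithmetical hierarchy) Let A ⊆ ℕ be an infinite computably enumerable set and let θ be a quasi-Gödel numbering of S_A. Let T₁ = {i | θ i is an initial-segment function for A} and T₂ = {i | θ i is total}. Then: (a) T₁ is Σ₂-complete, i.e. there is a decidable computable relation R ⊆ ℕ × ℕ × ℕ with i ∈ T₁ ↔ ∃ x ∀ y, R(i,x,y), and for every decidable computable relation Z ⊆ ℕ × ℕ × ℕ the set {i | ∃ x ∀ y, Z(i,x,y)} one-one reduces to T₁ via an injective total computable function; (b) T₂ is Π₂-complete, i.e. there is a decidable computable relation R' with i ∈ T₂ ↔ ∀ x ∃ y, R'(i,x,y), and every set of the form {i | ∀ x ∃ y, Z(i,x,y)} with Z decidable computable one-one reduces to T₂. -/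
namespace APos

/-- bounded forall: `Fb W i x s = true ↔ ∀ y ≤ s, W i x y`. -/
def Fb (W : ℕ → ℕ → ℕ → Bool) (i x s : ℕ) : Bool :=
  Nat.rec (W i x 0) (fun y IH => IH && W i x (y+1)) s

lemma Fb_iff (W : ℕ → ℕ → ℕ → Bool) (i x : ℕ) :
    ∀ s, Fb W i x s = true ↔ ∀ y ≤ s, W i x y = true := by
  intro s
  induction s with
  | zero => simp [Fb, Nat.le_zero]
  | succ n ih =>
    show (Fb W i x n && W i x (n+1)) = true ↔ _
    rw [Bool.and_eq_true, ih]
    constructor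
    · rintro ⟨h1, h2⟩ y hy
      rcases Nat.lt_or_ge y (n+1) with h | h
      · exact h1 y (Nat.lt_succ_iff.mp h)
      · have : y = n + 1 := le_antisymm hy h
        rwa [this]
    · intro h
      exact ⟨fun y hy => h y (hy.trans (Nat.le_succ n)), h (n+1) le_rfl⟩

/-- auxiliary: least `x ≤ n` with `Fb W i x s`, else `n+1`. -/
def HB (W : ℕ → ℕ → ℕ → Bool) (i s n : ℕ) : ℕ :=
  Nat.rec (if Fb W i 0 s then 0 else 1)
    (fun m IH => if IH ≤ m then IH else if Fb W i (m+1) s then m+1 else m+2) n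

lemma HB_zero (W : ℕ → ℕ → ℕ → Bool) (i s : ℕ) :
    HB W i s 0 = if Fb W i 0 s then 0 else 1 := rfl

lemma HB_succ (W : ℕ → ℕ → ℕ → Bool) (i s n : ℕ) :
    HB W i s (n+1) = if HB W i s n ≤ n then HB W i s n
      else if Fb W i (n+1) s then n+1 else n+2 := rfl

lemma HB_spec (W : ℕ → ℕ → ℕ → Bool) (i s : ℕ) : ∀ n,
    HB W i s n ≤ n + 1 ∧ (∀ x < HB W i s n, Fb W i x s = false) ∧
      (HB W i s n ≤ n → Fb W i (HB W i s n) s = true) := by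
  intro n
  induction n with
  | zero =>
    rw [HB_zero]
    by_cases h : Fb W i 0 s = true
    · rw [if_pos h]
      exact ⟨by omega, fun x hx => by omega, fun _ => h⟩
    · rw [if_neg h]
      refine ⟨le_rfl, fun x hx => ?_, by omega⟩
      have : x = 0 := by omega
      subst this
      exact Bool.eq_false_iff.mpr h
  | succ n ih =>
    obtain ⟨hle, hlt, hsat⟩ := ih
    rw [HB_succ]
    by_cases h1 : HB W i s n ≤ n
    · rw [if_pos h1]
      exact ⟨by omega, hlt, fun _ => hsat h1⟩
    · have he : HB W i s n = n + 1 := by omega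
      rw [if_neg h1]
      by_cases h2 : Fb W i (n+1) s = true
      · rw [if_pos h2]
        exact ⟨by omega, he ▸ hlt, fun _ => h2⟩
      · rw [if_neg h2]
        refine ⟨le_rfl, fun x hx => ?_, by omega⟩
        rcases Nat.lt_or_ge x (n+1) with h | h
        · exact hlt x (he ▸ h)
        · have : x = n + 1 := by omega
          subst this
          exact Bool.eq_false_iff.mpr h2

def cB (W : ℕ → ℕ → ℕ → Bool) (i s : ℕ) : ℕ := HB W i s s

lemma cB_le (W : ℕ → ℕ → ℕ → Bool) (i s : ℕ) : cB W i s ≤ s + 1 :=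
  (HB_spec W i s s).1

lemma cB_lt_not (W : ℕ → ℕ → ℕ → Bool) (i s : ℕ) :
    ∀ x < cB W i s, ∃ y ≤ s, W i x y = false := by
  intro x hx
  have hfalse := (HB_spec W i s s).2.1 x hx
  by_contra hc
  push_neg at hc
  have htrue : Fb W i x s = true := (Fb_iff W i x s).mpr (by
    intro y hy
    simpa using hc y hy)
  rw [htrue] at hfalse
  exact absurd hfalse (by simp)

lemma cB_sat (W : ℕ → ℕ → ℕ → Bool) (i s : ℕ) (h : cB W i s ≤ s) :
    ∀ y ≤ s, W i (cB W i s) y = true :=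
  (Fb_iff W i _ s).mp ((HB_spec W i s s).2.2 h)

lemma cB_mono (W : ℕ → ℕ → ℕ → Bool) (i : ℕ) : Monotone (cB W i) := by
  apply monotone_nat_of_le_succ
  intro s
  rcases Nat.lt_or_ge (cB W i (s+1)) (s+1) with h | h
  · -- cB (s+1) ≤ s, satisfied up to s+1 hence up to s
    have hsat := cB_sat W i (s+1) (by omega)
    by_contra hc
    push_neg at hc
    obtain ⟨y, hy, hWy⟩ := cB_lt_not W i s _ hc
    have := hsat y (by omega)
    rw [this] at hWy; exact absurd hWy (by simp)
  · exact le_trans (cB_le W i s) h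

/-- If `∃ x, ∀ y, W i x y`, then `cB W i` is bounded. -/
lemma cB_bounded (W : ℕ → ℕ → ℕ → Bool) (i : ℕ) (x₀ : ℕ) (hx : ∀ y, W i x₀ y = true) :
    ∀ s, cB W i s ≤ x₀ := by
  intro s
  by_contra hc
  push_neg at hc
  obtain ⟨y, _, hWy⟩ := cB_lt_not W i s x₀ hc
  rw [hx y] at hWy; exact absurd hWy (by simp)

/-- If `∀ x, ∃ y, ¬ W i x y`, then `cB W i` is unbounded. -/
lemma cB_unbounded (W : ℕ → ℕ → ℕ → Bool) (i : ℕ)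
    (h : ∀ x, ∃ y, W i x y = false) : ∀ N, ∃ s, N ≤ cB W i s := by
  intro N
  choose yf hyf using h
  refine ⟨N + (Finset.range N).sup yf, ?_⟩
  set s := N + (Finset.range N).sup yf with hs
  by_contra hc
  push_neg at hc
  have hcs : cB W i s ≤ s := by omega
  have := cB_sat W i s hcs (yf (cB W i s)) ?_
  · rw [hyf (cB W i s)] at this; exact absurd this (by simp)
  · have : yf (cB W i s) ≤ (Finset.range N).sup yf :=
      Finset.le_sup (Finset.mem_range.mpr hc)
    omega

/-- max of `g` over `{0,...,n}`. -/
def Mx (g : ℕ → ℕ) (n : ℕ) : ℕ := Nat.rec (g 0) (fun m IH => max IH (g (m+1))) n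

lemma le_Mx (g : ℕ → ℕ) : ∀ n, ∀ t ≤ n, g t ≤ Mx g n := by
  intro n
  induction n with
  | zero => intro t ht; simp at ht; simp [ht, Mx]
  | succ n ih =>
    intro t ht
    show g t ≤ max (Mx g n) (g (n+1))
    rcases Nat.lt_or_ge t (n+1) with h | h
    · exact le_trans (ih t (by omega)) (le_max_left _ _)
    · have : t = n + 1 := by omega
      subst this; exact le_max_right _ _

lemma Mx_mem (g : ℕ → ℕ) : ∀ n, ∃ t ≤ n, Mx g n = g t := by
  intro n
  induction n with
  | zero => exact ⟨0, le_rfl, rfl⟩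
  | succ n ih =>
    obtain ⟨t, ht, hMt⟩ := ih
    show ∃ t' ≤ n + 1, max (Mx g n) (g (n+1)) = g t'
    rcases le_total (Mx g n) (g (n+1)) with h | h
    · exact ⟨n+1, le_rfl, max_eq_right h⟩
    · exact ⟨t, by omega, (max_eq_left h).trans hMt⟩

lemma Mx_mono (g : ℕ → ℕ) : Monotone (Mx g) := by
  apply monotone_nat_of_le_succ
  intro n
  exact le_max_left _ _


section Comp

variable {W : ℕ → ℕ → ℕ → Bool}

open Computable


lemma Fb_comp (hW : Computable (fun p : ℕ × ℕ × ℕ => W p.1 p.2.1 p.2.2)) :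
    Computable (fun p : ℕ × ℕ × ℕ => Fb W p.1 p.2.1 p.2.2) := by
  have hg1 : Computable (fun p : ℕ × ℕ × ℕ => (p.1, (p.2.1, (0:ℕ)))) :=
    Computable.pair fst ((fst.comp snd).pair (const 0))
  have hg := hW.comp hg1
  have hh1 : Computable (fun r : (ℕ × ℕ × ℕ) × ℕ × Bool =>
      (r.1.1, (r.1.2.1, r.2.1 + 1))) :=
    Computable.pair (fst.comp fst)
      (Computable.pair ((fst.comp snd).comp fst) (succ.comp (fst.comp snd)))
  have hh2 := hW.comp hh1
  have hh3 : Computable (fun r : (ℕ × ℕ × ℕ) × ℕ × Bool => r.2.2) := snd.comp snd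
  have hh : Computable₂ (fun (p : ℕ × ℕ × ℕ) (q : ℕ × Bool) => q.2 && W p.1 p.2.1 (q.1+1)) :=
    Primrec.and.to_comp.comp hh3 hh2
  have hf : Computable (fun p : ℕ × ℕ × ℕ => p.2.2) := snd.comp snd
  have := Computable.nat_rec (f := fun p : ℕ × ℕ × ℕ => p.2.2) hf hg hh
  exact this.of_eq (fun p => rfl)

lemma cB_comp (hW : Computable (fun p : ℕ × ℕ × ℕ => W p.1 p.2.1 p.2.2)) :
    Computable (fun p : ℕ × ℕ => cB W p.1 p.2) := by
  have hFb := Fb_comp hW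
  have hg1 : Computable (fun p : ℕ × ℕ => (p.1, ((0:ℕ), p.2))) :=
    Computable.pair fst ((const 0).pair snd)
  have hg2 := hFb.comp hg1
  have hg : Computable (fun p : ℕ × ℕ => if Fb W p.1 0 p.2 then (0:ℕ) else 1) := by
    have := Computable.cond hg2 (const (0:ℕ)) (const 1)
    exact this.of_eq (fun p => by cases h : Fb W p.1 0 p.2 <;> simp [h])
  have hc11 : Computable (fun r : (ℕ × ℕ) × ℕ × ℕ => r.2.2) := snd.comp snd
  have hc12 : Computable (fun r : (ℕ × ℕ) × ℕ × ℕ => r.2.1) := fst.comp snd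
  have hcond1 := Primrec.nat_le.decide.to_comp.comp hc11 hc12
  have hc21 : Computable (fun r : (ℕ × ℕ) × ℕ × ℕ => (r.1.1, (r.2.1+1, r.1.2))) :=
    Computable.pair (fst.comp fst)
      (Computable.pair (succ.comp (fst.comp snd)) (snd.comp fst))
  have hcond2 := hFb.comp hc21
  have hinner : Computable (fun r : (ℕ × ℕ) × ℕ × ℕ =>
      if Fb W r.1.1 (r.2.1+1) r.1.2 then r.2.1+1 else r.2.1+2) := by
    have := Computable.cond hcond2 (succ.comp (hc12))
      (succ.comp (succ.comp hc12))
    exact this.of_eq (fun r => by cases h : Fb W r.1.1 (r.2.1+1) r.1.2 <;> simp [h])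
  have hh : Computable₂ (fun (p : ℕ × ℕ) (q : ℕ × ℕ) =>
      if q.2 ≤ q.1 then q.2 else if Fb W p.1 (q.1+1) p.2 then q.1+1 else q.1+2) := by
    have := Computable.cond hcond1 hc11 hinner
    exact this.of_eq (fun r => by by_cases h : r.2.2 ≤ r.2.1 <;> simp [h])
  have := Computable.nat_rec (f := fun p : ℕ × ℕ => p.2) snd hg hh
  exact this.of_eq (fun p => rfl)

lemma Mx_comp {g : ℕ → ℕ} (hg : Computable g) : Computable (Mx g) := by
  have hh1 : Computable (fun r : ℕ × ℕ × ℕ => g (r.2.1 + 1)) :=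
    hg.comp (succ.comp (fst.comp snd))
  have hh2 : Computable (fun r : ℕ × ℕ × ℕ => r.2.2) := snd.comp snd
  have hh : Computable₂ (fun (_ : ℕ) (q : ℕ × ℕ) => max q.2 (g (q.1+1))) :=
    Primrec.nat_max.to_comp.comp hh2 hh1
  have := Computable.nat_rec (f := fun n : ℕ => n) Computable.id (const (g 0)) hh
  exact this.of_eq (fun n => rfl)

def kF (W : ℕ → ℕ → ℕ → Bool) (g : ℕ → ℕ) (t₁ : ℕ) (i n : ℕ) : ℕ :=
  if n.unpair.1.unpair.1 = 0 then Nat.pair n.unpair.2 0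
  else if n.unpair.2 < Mx g (t₁ + cB W i n.unpair.1.unpair.2) then Nat.pair n.unpair.2 (i+1)
  else 0

lemma kF_comp {W : ℕ → ℕ → ℕ → Bool} {g : ℕ → ℕ} (t₁ : ℕ)
    (hW : Computable (fun p : ℕ × ℕ × ℕ => W p.1 p.2.1 p.2.2)) (hg : Computable g) :
    Computable₂ (kF W g t₁) := by
  have pu1 : Primrec (fun n : ℕ => n.unpair.1) := Primrec.fst.comp Primrec.unpair
  have pu2 : Primrec (fun n : ℕ => n.unpair.2) := Primrec.snd.comp Primrec.unpair
  have u2 : Computable (fun p : ℕ × ℕ => p.2.unpair.2) := pu2.to_comp.comp snd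
  have u11 : Computable (fun p : ℕ × ℕ => p.2.unpair.1.unpair.1) :=
    (pu1.comp pu1).to_comp.comp snd
  have u12 : Computable (fun p : ℕ × ℕ => p.2.unpair.1.unpair.2) :=
    (pu2.comp pu1).to_comp.comp snd
  have h1 := cB_comp hW
  have h2 : Computable (fun p : ℕ × ℕ => t₁ + cB W p.1 p.2) :=
    Primrec.nat_add.to_comp.comp (const t₁) h1
  have hbc := (Mx_comp hg).comp h2
  have hb' := hbc.comp (fst.pair u12)
  have cond1 : Computable (fun p : ℕ × ℕ => decide (p.2.unpair.1.unpair.1 = 0)) :=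
    Primrec.eq.decide.to_comp.comp u11 (const 0)
  have br1 : Computable (fun p : ℕ × ℕ => Nat.pair p.2.unpair.2 0) :=
    Primrec₂.natPair.to_comp.comp u2 (const 0)
  have cond2 := Primrec.nat_lt.decide.to_comp.comp u2 hb'
  have br2 : Computable (fun p : ℕ × ℕ => Nat.pair p.2.unpair.2 (p.1+1)) :=
    Primrec₂.natPair.to_comp.comp u2 (succ.comp fst)
  have inner := Computable.cond cond2 br2 (const 0)
  have final := Computable.cond cond1 br1 inner
  exact final.of_eq (fun p => by
    by_cases h1 : p.2.unpair.1.unpair.1 = 0 <;>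
      by_cases h2 : p.2.unpair.2 < Mx g (t₁ + cB W p.1 p.2.unpair.1.unpair.2) <;>
        simp [kF, h1, h2])

end Comp

lemma construction (A : Set ℕ) (θ : ℕ → ℕ →. ℕ) (hrange : Set.range θ = SA A)
    (hq2 : QGN2 A θ) (g : ℕ → ℕ) (hg : Computable g) (hA : A = Set.range g)
    (hgu : ∀ N, ∃ t, N ≤ g t)
    (W : ℕ → ℕ → ℕ → Bool) (hW : Computable (fun p : ℕ × ℕ × ℕ => W p.1 p.2.1 p.2.2)) :
    ∃ v : ℕ → ℕ, Computable v ∧ Function.Injective v ∧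
      ∀ i, ((∃ x, ∀ y, W i x y = true) → IsInitSeg A (θ (v i)) ∧ ¬ ∀ x, (θ (v i) x).Dom) ∧
           (¬ (∃ x, ∀ y, W i x y = true) →
              (∀ x, (θ (v i) x).Dom) ∧ ¬ IsInitSeg A (θ (v i))) := by
  classical
  obtain ⟨t₁, ht₁⟩ := hgu 1
  set b : ℕ → ℕ → ℕ := fun i s => Mx g (t₁ + cB W i s) with hbdef
  have hb1 : ∀ i s, 1 ≤ b i s := fun i s => le_trans ht₁ (le_Mx g _ t₁ (by omega))
  have hbA : ∀ i s, b i s ∈ A := by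
    intro i s
    obtain ⟨t, _, ht⟩ := Mx_mem g (t₁ + cB W i s)
    rw [hA]
    exact ⟨t, ht.symm⟩
  have hbmono : ∀ i, Monotone (b i) := fun i s1 s2 h =>
    Mx_mono g (by have := cB_mono W i h; omega)
  set L : ℕ → ℕ := fun i => sSup (Set.range (b i)) with hLdef
  have hcaseB : ∀ i, (∃ x, ∀ y, W i x y = true) →
      (∀ s, b i s ≤ L i) ∧ (∃ s, b i s = L i) := by
    rintro i ⟨x₀, hx₀⟩
    have hbdd : BddAbove (Set.range (b i)) := by
      refine ⟨Mx g (t₁ + x₀), ?_⟩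
      rintro _ ⟨s, rfl⟩
      exact Mx_mono g (by have := cB_bounded W i x₀ hx₀ s; omega)
    have hne : (Set.range (b i)).Nonempty := ⟨b i 0, 0, rfl⟩
    obtain ⟨s, hs⟩ := Nat.sSup_mem hne hbdd
    exact ⟨fun s' => le_csSup hbdd ⟨s', rfl⟩, ⟨s, hs⟩⟩
  have hcaseNB : ∀ i, ¬ (∃ x, ∀ y, W i x y = true) → ∀ N, ∃ s, N ≤ b i s := by
    intro i hB N
    push_neg at hB
    obtain ⟨t, ht⟩ := hgu N
    obtain ⟨s, hs⟩ := cB_unbounded W i (fun x => by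
      obtain ⟨y, hy⟩ := hB x
      exact ⟨y, by simpa using hy⟩) t
    refine ⟨s, le_trans ht (le_Mx g _ t (by omega))⟩
  set r : ℕ → (ℕ →. ℕ) := fun i =>
    if (∃ x, ∀ y, W i x y = true) then
      (fun m => if m < L i then Part.some i else Part.none)
    else (fun _ => Part.some i) with hrdef
  have hrB : ∀ i, (∃ x, ∀ y, W i x y = true) →
      r i = fun m => if m < L i then Part.some i else Part.none := by
    intro i h; simp only [hrdef, if_pos h]; exact if_pos h
  have hrNB : ∀ i, ¬ (∃ x, ∀ y, W i x y = true) → r i = fun _ => Part.some i := by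
    intro i h; simp only [hrdef, if_neg h]; exact if_neg h
  have hLpos : ∀ i, (∃ x, ∀ y, W i x y = true) → 0 < L i := by
    intro i h
    exact lt_of_lt_of_le (hb1 i 0) ((hcaseB i h).1 0)
  have hr0 : ∀ i, r i 0 = Part.some i := by
    intro i
    by_cases h : ∃ x, ∀ y, W i x y = true
    · rw [hrB i h]
      exact if_pos (hLpos i h)
    · rw [hrNB i h]
  have hrSA : ∀ i, r i ∈ SA A := by
    intro i
    by_cases h : ∃ x, ∀ y, W i x y = true
    · right
      rw [hrB i h]
      right
      obtain ⟨s, hs⟩ := (hcaseB i h).2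
      refine ⟨L i, by rw [← hs]; exact hbA i s, ?_⟩
      ext m
      by_cases hm : m < L i <;> simp [hm]
    · left
      refine ⟨fun _ => i, Computable.const i, fun x => ?_⟩
      rw [hrNB i h]
  have hkrange : ∀ i, Set.range (kF W g t₁ i) = graphE (r i) := by
    intro i
    apply Set.Subset.antisymm
    · rintro _ ⟨n, rfl⟩
      rw [kF]
      by_cases h1 : n.unpair.1.unpair.1 = 0
      · rw [if_pos h1]
        exact Or.inl ⟨n.unpair.2, rfl⟩
      · rw [if_neg h1]
        by_cases h2 : n.unpair.2 < b i n.unpair.1.unpair.2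
        · rw [if_pos h2]
          refine Or.inr ⟨n.unpair.2, i, ?_, rfl⟩
          by_cases h : ∃ x, ∀ y, W i x y = true
          · rw [hrB i h]
            exact if_pos (lt_of_lt_of_le h2 ((hcaseB i h).1 _))
          · rw [hrNB i h]
        · rw [if_neg h2]
          exact Or.inl ⟨0, rfl⟩
    · rintro n (⟨y, rfl⟩ | ⟨x, z, hxz, rfl⟩)
      · refine ⟨Nat.pair (Nat.pair 0 0) y, ?_⟩
        simp [kF, Nat.unpair_pair]
      · by_cases h : ∃ x, ∀ y, W i x y = true
        · rw [hrB i h] at hxz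
          change (if x < L i then Part.some i else Part.none) = Part.some z at hxz
          by_cases hx : x < L i
          · rw [if_pos hx] at hxz
            have hzi : z = i := by
              have := Part.some_inj.mp hxz
              omega
            obtain ⟨s, hs⟩ := (hcaseB i h).2
            have hbs : Mx g (t₁ + cB W i s) = b i s := rfl
            refine ⟨Nat.pair (Nat.pair 1 s) x, ?_⟩
            rw [kF]
            simp only [Nat.unpair_pair]
            rw [if_neg (by omega), if_pos (by omega), hzi]
          · rw [if_neg hx] at hxz
            exact absurd hxz.symm (Part.some_ne_none z)
        · rw [hrNB i h] at hxz
          have hzi : z = i := by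
            have := Part.some_inj.mp hxz
            omega
          obtain ⟨s, hs⟩ := hcaseNB i h (x+1)
          have hbs : Mx g (t₁ + cB W i s) = b i s := rfl
          refine ⟨Nat.pair (Nat.pair 1 s) x, ?_⟩
          rw [kF]
          simp only [Nat.unpair_pair]
          rw [if_neg (by omega), if_pos (by omega), hzi]
  obtain ⟨v, hv, hvspec⟩ := hq2 (kF W g t₁) (kF_comp t₁ hW hg)
  have hθv : ∀ i, θ (v i) = r i := fun i => hvspec i (r i) (hrSA i) (hkrange i)
  refine ⟨v, hv, ?_, ?_⟩
  · intro i j hij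
    have : r i = r j := by rw [← hθv i, ← hθv j, hij]
    have := congrFun this 0
    rw [hr0 i, hr0 j] at this
    exact Part.some_inj.mp this
  · intro i
    constructor
    · intro h
      rw [hθv i, hrB i h]
      obtain ⟨s, hs⟩ := (hcaseB i h).2
      constructor
      · right
        refine ⟨L i, by rw [← hs]; exact hbA i s, ?_⟩
        ext m
        by_cases hm : m < L i <;> simp [hm]
      · intro hall
        have := hall (L i)
        simp at this
    · intro h
      rw [hθv i, hrNB i h]
      refine ⟨fun x => trivial, ?_⟩
      rintro (hdom | ⟨a, _, hdom⟩)
      · have : (0:ℕ) ∈ ({x : ℕ | (Part.some i).Dom} : Set ℕ) := trivial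
        rw [hdom] at this
        exact this
      · have : a ∈ ({x : ℕ | (Part.some i).Dom} : Set ℕ) := trivial
        rw [hdom] at this
        simp at this


end APos

/-- Position in the arithmetical hierarchy: the set of indices of initial-segment
functions is Σ₂-complete; the set of indices of total functions is Π₂-complete. -/
theorem arithmetical_position (A : Set ℕ) (hAinf : A.Infinite) (hAce : CEset A)
    (θ : ℕ → ℕ →. ℕ) (hθ : QuasiGodel A θ) :
    ((∃ R : ℕ → ℕ → ℕ → Bool,
        Computable (fun p : ℕ × ℕ × ℕ => R p.1 p.2.1 p.2.2) ∧
        (∀ i, IsInitSeg A (θ i) ↔ ∃ x, ∀ y, R i x y = true) ∧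
        ∀ Z : ℕ → ℕ → ℕ → Bool,
          Computable (fun p : ℕ × ℕ × ℕ => Z p.1 p.2.1 p.2.2) →
          OneOneReducible (fun i => ∃ x, ∀ y, Z i x y = true)
            (fun i => IsInitSeg A (θ i)))) ∧
    ((∃ R' : ℕ → ℕ → ℕ → Bool,
        Computable (fun p : ℕ × ℕ × ℕ => R' p.1 p.2.1 p.2.2) ∧
        (∀ i, (∀ x, (θ i x).Dom) ↔ ∀ x, ∃ y, R' i x y = true) ∧
        ∀ Z : ℕ → ℕ → ℕ → Bool,
          Computable (fun p : ℕ × ℕ × ℕ => Z p.1 p.2.1 p.2.2) →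
          OneOneReducible (fun i => ∀ x, ∃ y, Z i x y = true)
            (fun i => ∀ x, (θ i x).Dom))) := by
  classical
  obtain ⟨hrange, hq1, hq2⟩ := hθ
  have hAne : A ≠ ∅ := by
    intro h
    rw [h] at hAinf
    exact hAinf Set.finite_empty
  obtain ⟨g, hg, hA⟩ : ∃ g, Computable g ∧ A = Set.range g := by
    rcases hAce with h | h
    · exact absurd h hAne
    · exact h
  have hgu : ∀ N, ∃ t, N ≤ g t := by
    intro N
    by_contra hc
    push_neg at hc
    have : A ⊆ Set.Iio N := by
      rw [hA]
      rintro _ ⟨t, rfl⟩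
      exact hc t
    exact hAinf ((Set.finite_Iio N).subset this)
  obtain ⟨h, hh, hhrange⟩ := hq1
  have hdom : ∀ i x, (θ i x).Dom ↔
      ∃ y, (h y).unpair.1 = Nat.pair i x ∧ 0 < (h y).unpair.2 := by
    intro i x
    constructor
    · intro hd
      obtain ⟨z, hz⟩ := Part.dom_iff_mem.mp hd
      have hmem : Nat.pair (Nat.pair i x) (z+1) ∈ Set.range h := by
        rw [hhrange]
        exact Or.inr ⟨i, x, z, Part.eq_some_iff.mpr hz, rfl⟩
      obtain ⟨y, hy⟩ := hmem
      exact ⟨y, by rw [hy, Nat.unpair_pair], by rw [hy, Nat.unpair_pair]; omega⟩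
    · rintro ⟨y, h1, h2⟩
      have hmem : h y ∈ Set.range h := ⟨y, rfl⟩
      rw [hhrange] at hmem
      rcases hmem with ⟨w, hw⟩ | ⟨j, x', z, hjz, heq⟩
      · rw [hw, Nat.unpair_pair] at h2
        omega
      · rw [heq, Nat.unpair_pair] at h1
        obtain ⟨hji, hxx⟩ := Nat.pair_eq_pair.mp h1
        subst hji; subst hxx
        rw [hjz]
        trivial
  have hSA : ∀ i, θ i ∈ SA A := fun i => hrange ▸ Set.mem_range_self i
  have hinit : ∀ i, IsInitSeg A (θ i) ↔ ∃ x, ¬ (θ i x).Dom := by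
    intro i
    constructor
    · rintro (hempty | ⟨a, _, hdom'⟩)
      · refine ⟨0, fun hd => ?_⟩
        have : (0:ℕ) ∈ {x : ℕ | (θ i x).Dom} := hd
        rw [hempty] at this
        exact this
      · refine ⟨a, fun hd => ?_⟩
        have : a ∈ {x : ℕ | (θ i x).Dom} := hd
        rw [hdom'] at this
        exact lt_irrefl a this
    · rintro ⟨x, hx⟩
      rcases hSA i with ⟨f, _, hf⟩ | hi
      · exact absurd (by rw [hf x]; trivial) hx
      · exact hi
  constructor
  · -- Σ₂ part
    refine ⟨fun i x y => !(decide ((h y).unpair.1 = Nat.pair i x) &&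
      decide (0 < (h y).unpair.2)), ?_, ?_, ?_⟩
    · have pu1 : Primrec (fun n : ℕ => n.unpair.1) := Primrec.fst.comp Primrec.unpair
      have pu2 : Primrec (fun n : ℕ => n.unpair.2) := Primrec.snd.comp Primrec.unpair
      have hy : Computable (fun p : ℕ × ℕ × ℕ => h p.2.2) :=
        hh.comp (Computable.snd.comp Computable.snd)
      have e1 := pu1.to_comp.comp hy
      have e2 := pu2.to_comp.comp hy
      have hpr : Computable (fun p : ℕ × ℕ × ℕ => Nat.pair p.1 p.2.1) :=
        Primrec₂.natPair.to_comp.comp Computable.fst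
          (Computable.fst.comp Computable.snd)
      have d1 := Primrec.eq.decide.to_comp.comp e1 hpr
      have d2 := Primrec.nat_lt.decide.to_comp.comp (Computable.const 0) e2
      have band := Primrec.and.to_comp.comp d1 d2
      exact Primrec.not.to_comp.comp band
    · intro i
      rw [hinit i]
      apply exists_congr
      intro x
      rw [hdom i x]
      constructor
      · intro hne y
        simp only [Bool.not_eq_true', Bool.and_eq_false_iff, decide_eq_false_iff_not]
        by_cases h1 : (h y).unpair.1 = Nat.pair i x
        · right
          intro h2
          exact hne ⟨y, h1, by simpa using h2⟩
        · exact Or.inl h1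
      · intro hall hex
        obtain ⟨y, h1, h2⟩ := hex
        have := hall y
        simp only [Bool.not_eq_true', Bool.and_eq_false_iff, decide_eq_false_iff_not] at this
        rcases this with h' | h'
        · exact h' h1
        · exact absurd h2 h'
    · intro Z hZ
      obtain ⟨v, hv, hinj, hprop⟩ := APos.construction A θ hrange hq2 g hg hA hgu Z hZ
      refine ⟨v, hv, hinj, fun i => ⟨fun hB => ((hprop i).1 hB).1, fun hI => ?_⟩⟩
      by_contra hc
      exact ((hprop i).2 hc).2 hI
  · -- Π₂ part
    refine ⟨fun i x y => decide ((h y).unpair.1 = Nat.pair i x) &&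
      decide (0 < (h y).unpair.2), ?_, ?_, ?_⟩
    · have pu1 : Primrec (fun n : ℕ => n.unpair.1) := Primrec.fst.comp Primrec.unpair
      have pu2 : Primrec (fun n : ℕ => n.unpair.2) := Primrec.snd.comp Primrec.unpair
      have hy : Computable (fun p : ℕ × ℕ × ℕ => h p.2.2) :=
        hh.comp (Computable.snd.comp Computable.snd)
      have e1 := pu1.to_comp.comp hy
      have e2 := pu2.to_comp.comp hy
      have hpr : Computable (fun p : ℕ × ℕ × ℕ => Nat.pair p.1 p.2.1) :=
        Primrec₂.natPair.to_comp.comp Computable.fst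
          (Computable.fst.comp Computable.snd)
      have d1 := Primrec.eq.decide.to_comp.comp e1 hpr
      have d2 := Primrec.nat_lt.decide.to_comp.comp (Computable.const 0) e2
      exact Primrec.and.to_comp.comp d1 d2
    · intro i
      apply forall_congr'
      intro x
      rw [hdom i x]
      constructor
      · rintro ⟨y, h1, h2⟩
        exact ⟨y, by simp [h1, h2]⟩
      · rintro ⟨y, hy⟩
        simp only [Bool.and_eq_true, decide_eq_true_eq] at hy
        exact ⟨y, hy.1, hy.2⟩
    · intro Z hZ
      have hZ' : Computable (fun p : ℕ × ℕ × ℕ => !Z p.1 p.2.1 p.2.2) :=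
        Primrec.not.to_comp.comp hZ
      obtain ⟨v, hv, hinj, hprop⟩ :=
        APos.construction A θ hrange hq2 g hg hA hgu (fun i x y => !Z i x y) hZ'
      refine ⟨v, hv, hinj, fun i => ⟨fun hB => ?_, fun hT => ?_⟩⟩
      · have hne : ¬∃ x, ∀ y, (!Z i x y) = true := by
          rintro ⟨x, hx⟩
          obtain ⟨y, hy⟩ := hB x
          have := hx y
          rw [Bool.not_eq_true', hy] at this
          exact absurd this (by simp)
        exact ((hprop i).2 hne).1
      · intro x
        by_contra hc
        push_neg at hc
        have hex : ∃ x, ∀ y, (!Z i x y) = true := by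
          refine ⟨x, fun y => ?_⟩
          rw [Bool.not_eq_true']
          exact Bool.eq_false_iff.mpr (hc y)
        exact ((hprop i).1 hex).2 hT
end

section
/- (Isomorphism Theorem for quasi-Gödel numberings) Let A ⊆ ℕ be an infinite computably enumerable set, and let θ and ψ be two quasi-Gödel numberings of S_A. Then θ and ψ are computably isomorphic: there is a bijective total computable g : ℕ → ℕ such that θ i = ψ (g i) for all i. -/
set_option maxHeartbeats 1000000

namespace IsoAux

open Nat.Partrec (Code)
open Nat.Partrec.Code
open Encodable Denumerable

/-! ### Basic partial functions and graphs -/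

def emptyf : ℕ →. ℕ := fun _ => Part.none

def constf (c : ℕ) : ℕ →. ℕ := fun _ => Part.some c

def filler : Set ℕ := {n | ∃ y, n = Nat.pair y 0}

lemma filler_subset_graphE (q : ℕ →. ℕ) : filler ⊆ graphE q := fun _ hn => Or.inl hn

lemma fill_mem_graphE (q : ℕ →. ℕ) (y : ℕ) : Nat.pair y 0 ∈ graphE q := Or.inl ⟨y, rfl⟩

lemma succ_mem_graphE {q : ℕ →. ℕ} {x z : ℕ} :
    Nat.pair x (z + 1) ∈ graphE q ↔ q x = Part.some z := by
  constructor
  · rintro (⟨y, hy⟩ | ⟨x', z', hq, he⟩)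
    · exact absurd (Nat.pair_eq_pair.1 hy).2 (by simp)
    · obtain ⟨hx, hz⟩ := Nat.pair_eq_pair.1 he
      subst hx
      obtain rfl : z = z' := by omega
      exact hq
  · intro hq; exact Or.inr ⟨x, z, hq, rfl⟩

lemma graphE_emptyf : graphE emptyf = filler := by
  ext n
  constructor
  · rintro (h | ⟨x, z, hq, _⟩)
    · exact h
    · exact absurd hq (by simp [emptyf])
  · exact fun h => Or.inl h

lemma graphE_constf (c : ℕ) :
    graphE (constf c) = filler ∪ {n | ∃ x, n = Nat.pair x (c + 1)} := by
  ext n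
  constructor
  · rintro (h | ⟨x, z, hq, he⟩)
    · exact Or.inl h
    · obtain rfl : c = z := by simpa [constf] using hq
      exact Or.inr ⟨x, he⟩
  · rintro (h | ⟨x, he⟩)
    · exact Or.inl h
    · exact Or.inr ⟨x, c, rfl, he⟩

lemma emptyf_mem_SA (A : Set ℕ) : emptyf ∈ SA A :=
  Or.inr (Or.inl (by ext x; simp [emptyf]))

lemma constf_mem_SA (A : Set ℕ) (c : ℕ) : constf c ∈ SA A :=
  Or.inl ⟨fun _ => c, Computable.const c, fun _ => rfl⟩

lemma constf_ne_emptyf (c : ℕ) : constf c ≠ emptyf := fun h => by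
  have := congrFun h 0
  simp [constf, emptyf] at this

/-! ### List helpers -/

def lmem : List ℕ → ℕ → Bool
  | [], _ => false
  | a :: l, x => bif a == x then true else lmem l x

lemma lmem_nil (x : ℕ) : lmem [] x = false := rfl

lemma lmem_cons (a x : ℕ) (l : List ℕ) :
    lmem (a :: l) x = bif a == x then true else lmem l x := rfl

lemma lmem_iff {L : List ℕ} {x : ℕ} : lmem L x = true ↔ x ∈ L := by
  induction L with
  | nil => rw [lmem_nil]; simp
  | cons a l ih =>
    rw [lmem_cons]
    cases ha : (a == x)
    · rw [cond_false, ih, List.mem_cons]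
      have hxa : ¬x = a := fun hxa => by
        rw [hxa, beq_self_eq_true] at ha
        exact Bool.noConfusion ha
      tauto
    · rw [cond_true]
      simp only [List.mem_cons, true_iff]
      exact Or.inl (eq_of_beq ha).symm

lemma lmem_primrec : Primrec₂ lmem := by
  have h := Primrec.list_rec (f := @Prod.fst (List ℕ) ℕ) (g := fun _ => false)
      (h := fun (p : List ℕ × ℕ) (q : ℕ × List ℕ × Bool) => bif q.1 == p.2 then true else q.2.2)
      Primrec.fst (Primrec.const false)
      (Primrec.cond
        (Primrec.beq.comp (Primrec.fst.comp Primrec.snd) (Primrec.snd.comp Primrec.fst))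
        (Primrec.const true)
        (Primrec.snd.comp (Primrec.snd.comp Primrec.snd)))
  have h2 : Primrec fun p : List ℕ × ℕ => lmem p.1 p.2 := by
    refine h.of_eq fun p => ?_
    obtain ⟨L, x⟩ := p
    induction L with
    | nil => rfl
    | cons a l ih => rw [lmem_cons, ← ih]
  exact h2

def lallSome : List (Option ℕ) → Bool
  | [] => true
  | a :: l => bif a.isSome then lallSome l else false

lemma lallSome_nil : lallSome [] = true := rfl

lemma lallSome_cons (a : Option ℕ) (l : List (Option ℕ)) :
    lallSome (a :: l) = bif a.isSome then lallSome l else false := rfl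

lemma lallSome_iff {L : List (Option ℕ)} :
    lallSome L = true ↔ ∀ o ∈ L, o.isSome = true := by
  induction L with
  | nil => rw [lallSome_nil]; simp
  | cons a l ih =>
    rw [lallSome_cons]
    cases ha : a.isSome
    · rw [cond_false]
      refine ⟨fun h => Bool.noConfusion h, fun h => ?_⟩
      have h2 := h a (List.mem_cons_self (a := a) (l := l))
      rw [ha] at h2
      exact Bool.noConfusion h2
    · rw [cond_true, ih]
      constructor
      · intro hl o ho
        rcases List.mem_cons.1 ho with rfl | ho'
        · exact ha
        · exact hl o ho'
      · intro hl o ho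
        exact hl o (List.mem_cons.2 (Or.inr ho))

lemma lallSome_primrec : Primrec lallSome := by
  have h := Primrec.list_rec (f := @Prod.fst (List (Option ℕ)) ℕ) (g := fun _ => true)
      (h := fun (_ : List (Option ℕ) × ℕ) (q : Option ℕ × List (Option ℕ) × Bool) =>
        bif q.1.isSome then q.2.2 else false)
      Primrec.fst (Primrec.const true)
      (Primrec.cond
        (Primrec.option_isSome.comp (Primrec.fst.comp Primrec.snd))
        (Primrec.snd.comp (Primrec.snd.comp Primrec.snd))
        (Primrec.const false))
  have h2 : Primrec fun p : List (Option ℕ) × ℕ => lallSome p.1 := by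
    refine h.of_eq fun p => ?_
    obtain ⟨L, x⟩ := p
    induction L with
    | nil => rfl
    | cons a l ih => rw [lallSome_cons, ← ih]
  exact h2.comp (Primrec.pair Primrec.id (Primrec.const 0))

def lookv : List (ℕ × ℕ) → ℕ → ℕ
  | [], _ => 0
  | a :: l, x => bif a.1 == x then a.2 else lookv l x

lemma lookv_cons (a : ℕ × ℕ) (l : List (ℕ × ℕ)) (x : ℕ) :
    lookv (a :: l) x = bif a.1 == x then a.2 else lookv l x := rfl

lemma lookv_primrec : Primrec₂ lookv := by
  have h := Primrec.list_rec (f := @Prod.fst (List (ℕ × ℕ)) ℕ) (g := fun _ => 0)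
      (h := fun (p : List (ℕ × ℕ) × ℕ) (q : (ℕ × ℕ) × List (ℕ × ℕ) × ℕ) =>
        bif q.1.1 == p.2 then q.1.2 else q.2.2)
      Primrec.fst (Primrec.const 0)
      (Primrec.cond
        (Primrec.beq.comp (Primrec.fst.comp (Primrec.fst.comp Primrec.snd))
          (Primrec.snd.comp Primrec.fst))
        (Primrec.snd.comp (Primrec.fst.comp Primrec.snd))
        (Primrec.snd.comp (Primrec.snd.comp Primrec.snd)))
  have h2 : Primrec fun p : List (ℕ × ℕ) × ℕ => lookv p.1 p.2 := by
    refine h.of_eq fun p => ?_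
    obtain ⟨L, x⟩ := p
    induction L with
    | nil => rfl
    | cons a l ih => rw [lookv_cons, ← ih]
  exact h2

lemma lookv_eq {σ : List (ℕ × ℕ)} {x b : ℕ} (hnd : (σ.map Prod.fst).Nodup)
    (hmem : (x, b) ∈ σ) : lookv σ x = b := by
  induction σ with
  | nil => simp at hmem
  | cons a l ih =>
    rw [List.map_cons, List.nodup_cons] at hnd
    rcases List.mem_cons.1 hmem with h | h
    · rw [← h, lookv_cons]
      simp
    · cases ha : (a.1 == x)
      · rw [lookv_cons, ha, cond_false]
        exact ih hnd.2 h
      · exfalso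
        apply hnd.1
        have : a.1 = x := by simpa using ha
        rw [this]
        exact List.mem_map_of_mem (f := Prod.fst) h

lemma key_unique {σ : List (ℕ × ℕ)} {x b b' : ℕ} (hnd : (σ.map Prod.fst).Nodup)
    (h1 : (x, b) ∈ σ) (h2 : (x, b') ∈ σ) : b = b' := by
  rw [← lookv_eq hnd h1, ← lookv_eq hnd h2]

lemma val_unique {σ : List (ℕ × ℕ)} {a a' y : ℕ} (hnd : (σ.map Prod.snd).Nodup)
    (h1 : (a, y) ∈ σ) (h2 : (a', y) ∈ σ) : a = a' := by
  induction σ with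
  | nil => simp at h1
  | cons p l ih =>
    rw [List.map_cons, List.nodup_cons] at hnd
    rcases List.mem_cons.1 h1 with e1 | m1
    · rcases List.mem_cons.1 h2 with e2 | m2
      · rw [← e2] at e1
        exact congrArg Prod.fst e1
      · exfalso
        apply hnd.1
        have hy : p.2 = y := (congrArg Prod.snd e1).symm
        rw [hy]
        exact List.mem_map_of_mem (f := Prod.snd) m2
    · rcases List.mem_cons.1 h2 with e2 | m2
      · exfalso
        apply hnd.1
        have hy : p.2 = y := (congrArg Prod.snd e2).symm
        rw [hy]
        exact List.mem_map_of_mem (f := Prod.snd) m1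
      · exact ih hnd.2 m1 m2

/-! ### Computability helpers -/

lemma computable_map_range {α : Type} [Primcodable α] {f : α → ℕ → ℕ} (hf : Computable₂ f) :
    Computable₂ fun a n => (List.range n).map (f a) := by
  have h₁ := Computable.nat_rec (f := fun p : α × ℕ => p.2)
      (g := fun _ : α × ℕ => ([] : List ℕ))
      (h := fun (p : α × ℕ) (q : ℕ × List ℕ) => q.2 ++ [f p.1 q.1])
      Computable.snd (Computable.const ([] : List ℕ))
      ((Computable.list_concat.comp (Computable.snd.comp Computable.snd)
        (hf.comp (Computable.fst.comp Computable.fst)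
          (Computable.fst.comp Computable.snd))).to₂)
  have h₂ : Computable fun p : α × ℕ => (List.range p.2).map (f p.1) := by
    refine h₁.of_eq fun p => ?_
    obtain ⟨a, n⟩ := p
    induction n with
    | zero => rfl
    | succ n ihn =>
      simp only [List.range_succ, List.map_append, List.map_cons, List.map_nil]
      rw [← ihn]
  exact Computable₂.mk h₂

lemma computable_find {α : Type} [Primcodable α] {q : α → ℕ → Bool} (hq : Computable₂ q)
    (hex : ∀ a, ∃ n, q a n = true) :
    ∃ F : α → ℕ, Computable F ∧ ∀ a, q a (F a) = true ∧ ∀ m < F a, q a m = false := by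
  have hp : Partrec fun a => Nat.rfind fun n => (Part.some (q a n)) := Partrec.rfind hq
  refine ⟨fun a => Nat.find (hex a), ?_, fun a => ⟨Nat.find_spec (hex a), fun m hm => ?_⟩⟩
  · refine Partrec.of_eq_tot hp fun a => ?_
    refine Nat.mem_rfind.2 ⟨?_, fun {m} hm => ?_⟩
    · exact Part.mem_some_iff.2 (Nat.find_spec (hex a)).symm
    · have := Nat.find_min (hex a) hm
      refine Part.mem_some_iff.2 ?_
      cases hqm : q a m
      · rfl
      · exact absurd hqm this
  · have := Nat.find_min (hex a) hm
    cases hqm : q a m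
    · rfl
    · exact absurd hqm this

end IsoAux

set_option maxHeartbeats 1000000

namespace IsoAux

open Nat.Partrec (Code)
open Nat.Partrec.Code
open Encodable Denumerable

/-! ### The universal graph set -/

def UG (ψ : ℕ → ℕ →. ℕ) : Set ℕ :=
  {n | ∃ w, n = Nat.pair w 0} ∪
    {n | ∃ i x z, ψ i x = Part.some z ∧ n = Nat.pair (Nat.pair i x) (z + 1)}

lemma mem_UG_succ {ψ : ℕ → ℕ →. ℕ} {i x z : ℕ} :
    Nat.pair (Nat.pair i x) (z + 1) ∈ UG ψ ↔ ψ i x = Part.some z := by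
  constructor
  · rintro (⟨w, hw⟩ | ⟨i', x', z', hz, he⟩)
    · exact absurd (Nat.pair_eq_pair.1 hw).2 (by simp)
    · obtain ⟨h1, h2⟩ := Nat.pair_eq_pair.1 he
      obtain ⟨rfl, rfl⟩ := Nat.pair_eq_pair.1 h1
      obtain rfl : z = z' := by omega
      exact hz
  · intro hz; exact Or.inr ⟨i, x, z, hz, rfl⟩

/-! ### `isGP` : recognizing graph points for index `i` -/

def isGP (i u : ℕ) : Bool :=
  bif u.unpair.2 == 0 then false else u.unpair.1.unpair.1 == i

lemma isGP_primrec : Primrec₂ isGP := by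
  have : Primrec fun p : ℕ × ℕ =>
      (bif p.2.unpair.2 == 0 then false else p.2.unpair.1.unpair.1 == p.1) :=
    Primrec.cond
      (Primrec.beq.comp (Primrec.snd.comp (Primrec.unpair.comp Primrec.snd)) (Primrec.const 0))
      (Primrec.const false)
      (Primrec.beq.comp
        (Primrec.fst.comp (Primrec.unpair.comp
          (Primrec.fst.comp (Primrec.unpair.comp Primrec.snd)))) Primrec.fst)
  exact this

lemma isGP_pair {i x z : ℕ} : isGP i (Nat.pair (Nat.pair i x) (z + 1)) = true := by
  simp [isGP, Nat.unpair_pair]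

lemma isGP_true {i u : ℕ} (h : isGP i u = true) :
    u.unpair.2 ≠ 0 ∧ u.unpair.1.unpair.1 = i := by
  unfold isGP at h
  cases h2 : (u.unpair.2 == 0)
  · rw [h2, cond_false] at h
    exact ⟨by simpa using h2, by simpa using h⟩
  · rw [h2, cond_true] at h; exact absurd h (by simp)

lemma hGP_decode {ψ : ℕ → ℕ →. ℕ} {h : ℕ → ℕ} (hh : Set.range h = UG ψ) {i n₀ : ℕ}
    (hgp : isGP i (h n₀) = true) :
    ∃ x z, ψ i x = Part.some z ∧ h n₀ = Nat.pair (Nat.pair i x) (z + 1) := by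
  have hmem : h n₀ ∈ UG ψ := hh ▸ Set.mem_range_self n₀
  obtain ⟨hne, hi⟩ := isGP_true hgp
  rcases hmem with ⟨w, hw⟩ | ⟨i', x, z, hz, he⟩
  · exact absurd (by rw [hw, Nat.unpair_pair]) hne
  · refine ⟨x, z, ?_, ?_⟩
    · have : i' = i := by rw [he, Nat.unpair_pair] at hi; rwa [Nat.unpair_pair] at hi
      rwa [this] at hz
    · have : i' = i := by rw [he, Nat.unpair_pair] at hi; rwa [Nat.unpair_pair] at hi
      rwa [this] at he
  
lemma exists_GP_of_some {ψ : ℕ → ℕ →. ℕ} {h : ℕ → ℕ} (hh : Set.range h = UG ψ) {i x z : ℕ}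
    (hz : ψ i x = Part.some z) :
    ∃ n₀, isGP i (h n₀) = true ∧ h n₀ = Nat.pair (Nat.pair i x) (z + 1) := by
  have : Nat.pair (Nat.pair i x) (z + 1) ∈ Set.range h := by
    rw [hh]; exact Or.inr ⟨i, x, z, hz, rfl⟩
  obtain ⟨n₀, hn₀⟩ := this
  exact ⟨n₀, by rw [hn₀]; exact isGP_pair, hn₀⟩

/-! ### estream : enumerating `graphE (ψ i)` -/

def esCore (t : ℕ × ℕ × ℕ) : ℕ :=
  bif isGP t.1 t.2.2 then
    (bif t.2.1.unpair.1 == 0 then Nat.pair t.2.1.unpair.2 0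
      else Nat.pair t.2.2.unpair.1.unpair.2 t.2.2.unpair.2)
  else Nat.pair t.2.1.unpair.2 0

lemma esCore_primrec : Primrec esCore := by
  refine Primrec.cond (isGP_primrec.comp Primrec.fst (Primrec.snd.comp Primrec.snd)) ?_ ?_
  · refine Primrec.cond
      (Primrec.beq.comp (Primrec.fst.comp (Primrec.unpair.comp (Primrec.fst.comp Primrec.snd)))
        (Primrec.const 0)) ?_ ?_
    · exact Primrec₂.natPair.comp
        (Primrec.snd.comp (Primrec.unpair.comp (Primrec.fst.comp Primrec.snd)))
        (Primrec.const 0)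
    · exact Primrec₂.natPair.comp
        (Primrec.snd.comp (Primrec.unpair.comp
          (Primrec.fst.comp (Primrec.unpair.comp (Primrec.snd.comp Primrec.snd)))))
        (Primrec.snd.comp (Primrec.unpair.comp (Primrec.snd.comp Primrec.snd)))
  · exact Primrec₂.natPair.comp
      (Primrec.snd.comp (Primrec.unpair.comp (Primrec.fst.comp Primrec.snd)))
      (Primrec.const 0)

def estream (h : ℕ → ℕ) (i m : ℕ) : ℕ := esCore (i, m, h m.unpair.2)

lemma estream_computable {h : ℕ → ℕ} (hc : Computable h) : Computable₂ (estream h) := by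
  have : Computable fun p : ℕ × ℕ => esCore (p.1, p.2, h p.2.unpair.2) :=
    esCore_primrec.to_comp.comp
      (Computable.pair Computable.fst (Computable.pair Computable.snd
        (hc.comp ((Primrec.snd.comp (Primrec.unpair.comp Primrec.snd)).to_comp))))
  exact Computable₂.mk this

lemma esCore_eq (i m u : ℕ) : esCore (i, m, u) =
    bif isGP i u then
      (bif m.unpair.1 == 0 then Nat.pair m.unpair.2 0
        else Nat.pair u.unpair.1.unpair.2 u.unpair.2)
    else Nat.pair m.unpair.2 0 := rfl

lemma range_estream {ψ : ℕ → ℕ →. ℕ} {h : ℕ → ℕ} (hh : Set.range h = UG ψ) (i : ℕ) :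
    Set.range (estream h i) = graphE (ψ i) := by
  ext n
  constructor
  · rintro ⟨m, rfl⟩
    unfold estream
    rw [esCore_eq]
    cases hgp : isGP i (h m.unpair.2)
    · rw [cond_false]
      exact fill_mem_graphE _ _
    · rw [cond_true]
      cases h0 : ((m.unpair.1 : ℕ) == 0)
      · rw [cond_false]
        obtain ⟨x, z, hz, he⟩ := hGP_decode hh hgp
        rw [he]
        simp only [Nat.unpair_pair]
        exact succ_mem_graphE.2 hz
      · rw [cond_true]
        exact fill_mem_graphE _ _
  · rintro (⟨y, rfl⟩ | ⟨x, z, hz, rfl⟩)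
    · refine ⟨Nat.pair 0 y, ?_⟩
      unfold estream
      rw [esCore_eq]
      simp only [Nat.unpair_pair]
      cases hgp : isGP i (h y) <;> simp
    · obtain ⟨n₀, hgp, he⟩ := exists_GP_of_some hh hz
      refine ⟨Nat.pair 1 n₀, ?_⟩
      unfold estream
      rw [esCore_eq]
      simp only [Nat.unpair_pair, hgp, cond_true]
      rw [he]
      simp [Nat.unpair_pair]

/-! ### cstream : enumerating `graphE (constf c)` -/

def cstream (c m : ℕ) : ℕ :=
  bif m.unpair.1 == 0 then Nat.pair m.unpair.2 0 else Nat.pair m.unpair.2 (c + 1)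

lemma cstream_primrec : Primrec₂ cstream := by
  have : Primrec fun p : ℕ × ℕ =>
      (bif p.2.unpair.1 == 0 then Nat.pair p.2.unpair.2 0 else Nat.pair p.2.unpair.2 (p.1 + 1)) :=
    Primrec.cond
      (Primrec.beq.comp (Primrec.fst.comp (Primrec.unpair.comp Primrec.snd)) (Primrec.const 0))
      (Primrec₂.natPair.comp (Primrec.snd.comp (Primrec.unpair.comp Primrec.snd))
        (Primrec.const 0))
      (Primrec₂.natPair.comp (Primrec.snd.comp (Primrec.unpair.comp Primrec.snd))
        (Primrec.succ.comp Primrec.fst))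
  exact this

lemma range_cstream (c : ℕ) : Set.range (cstream c) = graphE (constf c) := by
  rw [graphE_constf]
  ext n
  constructor
  · rintro ⟨m, rfl⟩
    unfold cstream
    cases h0 : (m.unpair.1 == 0)
    · rw [cond_false]; exact Or.inr ⟨_, rfl⟩
    · rw [cond_true]; exact Or.inl ⟨_, rfl⟩
  · rintro (⟨y, rfl⟩ | ⟨x, rfl⟩)
    · exact ⟨Nat.pair 0 y, by simp [cstream, Nat.unpair_pair]⟩
    · exact ⟨Nat.pair 1 x, by simp [cstream, Nat.unpair_pair]⟩

end IsoAux

set_option maxHeartbeats 1000000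

namespace IsoAux

open Nat.Partrec (Code)
open Nat.Partrec.Code
open Encodable Denumerable

/-! ### firstGP and dstream -/

def firstGP (i : ℕ) : List ℕ → Option ℕ
  | [] => none
  | u :: l => bif isGP i u then some u else firstGP i l

lemma firstGP_nil (i : ℕ) : firstGP i [] = none := rfl

lemma firstGP_cons (i u : ℕ) (l : List ℕ) :
    firstGP i (u :: l) = bif isGP i u then some u else firstGP i l := rfl

lemma firstGP_primrec : Primrec₂ firstGP := by
  have h := Primrec.list_rec (f := @Prod.snd ℕ (List ℕ)) (g := fun _ => (none : Option ℕ))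
      (h := fun (p : ℕ × List ℕ) (q : ℕ × List ℕ × Option ℕ) =>
        bif isGP p.1 q.1 then some q.1 else q.2.2)
      Primrec.snd (Primrec.const none)
      (Primrec.cond
        (isGP_primrec.comp (Primrec.fst.comp Primrec.fst) (Primrec.fst.comp Primrec.snd))
        (Primrec.option_some.comp (Primrec.fst.comp Primrec.snd))
        (Primrec.snd.comp (Primrec.snd.comp Primrec.snd)))
  have h2 : Primrec fun p : ℕ × List ℕ => firstGP p.1 p.2 := by
    refine h.of_eq fun p => ?_
    obtain ⟨i, L⟩ := p
    induction L with
    | nil => rfl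
    | cons a l ih => rw [firstGP_cons, ← ih]
  exact h2

lemma firstGP_append (i : ℕ) (l₁ l₂ : List ℕ) :
    firstGP i (l₁ ++ l₂) = (firstGP i l₁).or (firstGP i l₂) := by
  induction l₁ with
  | nil => rw [List.nil_append, firstGP_nil]; rfl
  | cons a l ih =>
    rw [List.cons_append, firstGP_cons, firstGP_cons]
    cases hgp : isGP i a
    · rw [cond_false, cond_false, ih]
    · rw [cond_true, cond_true]; rfl

lemma firstGP_mapRange_some {h : ℕ → ℕ} {i n₀ : ℕ} (hn₀ : isGP i (h n₀) = true)
    (hmin : ∀ m < n₀, isGP i (h m) = false) (c : ℕ) :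
    firstGP i ((List.range c).map h) = if n₀ < c then some (h n₀) else none := by
  induction c with
  | zero => rw [List.range_zero, List.map_nil, firstGP_nil, if_neg (by omega)]
  | succ c ih =>
    rw [List.range_succ, List.map_append, firstGP_append, ih]
    by_cases hlt : n₀ < c
    · rw [if_pos hlt, if_pos (by omega)]; rfl
    · rw [if_neg hlt]
      by_cases heq : n₀ = c
      · subst heq
        rw [List.map_cons, List.map_nil, firstGP_cons, hn₀, cond_true,
          if_pos (Nat.lt_succ_self n₀)]
        rfl
      · have hgt : c < n₀ := by omega
        rw [if_neg (by omega), List.map_cons, List.map_nil, firstGP_cons, hmin c hgt,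
          cond_false, firstGP_nil]
        rfl

lemma firstGP_mapRange_none {h : ℕ → ℕ} {i : ℕ} (hall : ∀ m, isGP i (h m) = false) (c : ℕ) :
    firstGP i ((List.range c).map h) = none := by
  induction c with
  | zero => rfl
  | succ c ih =>
    rw [List.range_succ, List.map_append, firstGP_append, ih, List.map_cons, List.map_nil,
      firstGP_cons, hall c, cond_false, firstGP_nil]
    rfl

def dsCore (p : ℕ × Option ℕ) : ℕ :=
  bif p.2.isSome then
    (bif p.1.unpair.2.unpair.1 == 0 then Nat.pair p.1.unpair.2.unpair.2 0
      else Nat.pair p.1.unpair.2.unpair.2 ((p.2.getD 0).unpair.2 + 1))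
  else Nat.pair p.1.unpair.2 0

lemma dsCore_primrec : Primrec dsCore := by
  refine Primrec.cond (Primrec.option_isSome.comp Primrec.snd) ?_ ?_
  · refine Primrec.cond
      (Primrec.beq.comp (Primrec.fst.comp (Primrec.unpair.comp
        (Primrec.snd.comp (Primrec.unpair.comp Primrec.fst)))) (Primrec.const 0)) ?_ ?_
    · exact Primrec₂.natPair.comp
        (Primrec.snd.comp (Primrec.unpair.comp
          (Primrec.snd.comp (Primrec.unpair.comp Primrec.fst))))
        (Primrec.const 0)
    · exact Primrec₂.natPair.comp
        (Primrec.snd.comp (Primrec.unpair.comp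
          (Primrec.snd.comp (Primrec.unpair.comp Primrec.fst))))
        (Primrec.succ.comp (Primrec.snd.comp (Primrec.unpair.comp
          (Primrec.option_getD.comp Primrec.snd (Primrec.const 0)))))
  · exact Primrec₂.natPair.comp
      (Primrec.snd.comp (Primrec.unpair.comp Primrec.fst)) (Primrec.const 0)

def dstream (h : ℕ → ℕ) (i m : ℕ) : ℕ :=
  dsCore (m, firstGP i ((List.range m.unpair.1).map h))

lemma dstream_computable {h : ℕ → ℕ} (hc : Computable h) : Computable₂ (dstream h) := by
  have hmap : Computable fun m : ℕ => (List.range m.unpair.1).map h := by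
    have h1 : Computable₂ fun (_ : ℕ) (n : ℕ) => h n := hc.comp Computable.snd
    exact (computable_map_range h1).comp Computable.id
      ((Primrec.fst.comp Primrec.unpair).to_comp)
  have h2 : Computable fun p : ℕ × ℕ =>
      dsCore (p.2, firstGP p.1 ((List.range p.2.unpair.1).map h)) :=
    dsCore_primrec.to_comp.comp
      (Computable.pair Computable.snd
        (firstGP_primrec.to_comp.comp Computable.fst (hmap.comp Computable.snd)))
  exact Computable₂.mk h2

lemma dsCore_none (m : ℕ) : dsCore (m, none) = Nat.pair m.unpair.2 0 := rfl

lemma dsCore_some_0 (m u : ℕ) (h0 : m.unpair.2.unpair.1 = 0) :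
    dsCore (m, some u) = Nat.pair m.unpair.2.unpair.2 0 := by
  unfold dsCore
  rw [show ((m, some u).2.isSome : Bool) = true from rfl, cond_true,
    show (m, some u).1 = m from rfl, h0]
  rfl

lemma dsCore_some_1 (m u : ℕ) (h0 : m.unpair.2.unpair.1 ≠ 0) :
    dsCore (m, some u) = Nat.pair m.unpair.2.unpair.2 (u.unpair.2 + 1) := by
  unfold dsCore
  rw [show ((m, some u).2.isSome : Bool) = true from rfl, cond_true,
    show (m, some u).1 = m from rfl]
  cases hk : m.unpair.2.unpair.1 with
  | zero => exact absurd hk h0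
  | succ k => rfl

lemma range_dstream_none {h : ℕ → ℕ} {i : ℕ} (hall : ∀ m, isGP i (h m) = false) :
    Set.range (dstream h i) = filler := by
  ext n
  constructor
  · rintro ⟨m, rfl⟩
    unfold dstream
    rw [firstGP_mapRange_none hall, dsCore_none]
    exact ⟨m.unpair.2, rfl⟩
  · rintro ⟨y, rfl⟩
    refine ⟨Nat.pair 0 y, ?_⟩
    unfold dstream
    simp only [Nat.unpair_pair, List.range_zero, List.map_nil, firstGP_nil, dsCore_none]

lemma range_dstream_some {h : ℕ → ℕ} {i n₀ : ℕ} (hn₀ : isGP i (h n₀) = true)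
    (hmin : ∀ m < n₀, isGP i (h m) = false) :
    Set.range (dstream h i) = filler ∪ {n | ∃ d, n = Nat.pair d ((h n₀).unpair.2 + 1)} := by
  ext n
  constructor
  · rintro ⟨m, rfl⟩
    unfold dstream
    rw [firstGP_mapRange_some hn₀ hmin]
    by_cases hlt : n₀ < m.unpair.1
    · rw [if_pos hlt]
      by_cases h0 : m.unpair.2.unpair.1 = 0
      · rw [dsCore_some_0 _ _ h0]
        exact Or.inl ⟨_, rfl⟩
      · rw [dsCore_some_1 _ _ h0]
        exact Or.inr ⟨_, rfl⟩
    · rw [if_neg hlt, dsCore_none]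
      exact Or.inl ⟨_, rfl⟩
  · rintro (⟨y, rfl⟩ | ⟨d, rfl⟩)
    · refine ⟨Nat.pair 0 y, ?_⟩
      unfold dstream
      simp only [Nat.unpair_pair, List.range_zero, List.map_nil, firstGP_nil, dsCore_none]
    · refine ⟨Nat.pair (n₀ + 1) (Nat.pair 1 d), ?_⟩
      unfold dstream
      simp only [Nat.unpair_pair]
      rw [firstGP_mapRange_some hn₀ hmin, if_pos (Nat.lt_succ_self n₀),
        dsCore_some_1 _ _ (by simp [Nat.unpair_pair])]
      simp [Nat.unpair_pair]

/-! ### evopt, jvalf, allHalt, collb -/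

def evopt (e a i q : ℕ) : Option ℕ := evaln a (ofNat Code e) (Nat.pair i q)

def jvalf (e a i q : ℕ) : ℕ := (evopt e a i q).getD 0

def allHalt (e a i n : ℕ) : Bool :=
  lallSome ((List.range (n + 1)).map (fun q => evopt e a i q))

def collb (e a i n : ℕ) : Bool :=
  lmem ((List.range n).map (fun q => jvalf e a i q)) (jvalf e a i n)

lemma evopt_primrec : Primrec fun p : ℕ × ℕ × ℕ × ℕ => evopt p.1 p.2.1 p.2.2.1 p.2.2.2 :=
  primrec_evaln.comp (Primrec.pair
    (Primrec.pair (Primrec.fst.comp Primrec.snd) ((Primrec.ofNat Code).comp Primrec.fst))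
    (Primrec₂.natPair.comp (Primrec.fst.comp (Primrec.snd.comp Primrec.snd))
      (Primrec.snd.comp (Primrec.snd.comp Primrec.snd))))

lemma jvalf_primrec : Primrec fun p : ℕ × ℕ × ℕ × ℕ => jvalf p.1 p.2.1 p.2.2.1 p.2.2.2 :=
  Primrec.option_getD.comp evopt_primrec (Primrec.const 0)

lemma evopt_primrec₂ : Primrec₂ fun (p : ℕ × ℕ × ℕ × ℕ) (q : ℕ) => evopt p.1 p.2.1 p.2.2.1 q :=
  evopt_primrec.comp (Primrec.pair (Primrec.fst.comp Primrec.fst)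
    (Primrec.pair (Primrec.fst.comp (Primrec.snd.comp Primrec.fst))
      (Primrec.pair (Primrec.fst.comp (Primrec.snd.comp (Primrec.snd.comp Primrec.fst)))
        Primrec.snd)))

lemma jvalf_primrec₂ : Primrec₂ fun (p : ℕ × ℕ × ℕ × ℕ) (q : ℕ) => jvalf p.1 p.2.1 p.2.2.1 q :=
  jvalf_primrec.comp (Primrec.pair (Primrec.fst.comp Primrec.fst)
    (Primrec.pair (Primrec.fst.comp (Primrec.snd.comp Primrec.fst))
      (Primrec.pair (Primrec.fst.comp (Primrec.snd.comp (Primrec.snd.comp Primrec.fst)))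
        Primrec.snd)))

lemma allHalt_primrec : Primrec fun p : ℕ × ℕ × ℕ × ℕ => allHalt p.1 p.2.1 p.2.2.1 p.2.2.2 := by
  have hmap : Primrec fun p : ℕ × ℕ × ℕ × ℕ =>
      (List.range (p.2.2.2 + 1)).map (fun q => evopt p.1 p.2.1 p.2.2.1 q) :=
    Primrec.list_map
      (Primrec.list_range.comp (Primrec.succ.comp
        (Primrec.snd.comp (Primrec.snd.comp Primrec.snd))))
      evopt_primrec₂
  exact lallSome_primrec.comp hmap

lemma collb_primrec : Primrec fun p : ℕ × ℕ × ℕ × ℕ => collb p.1 p.2.1 p.2.2.1 p.2.2.2 := by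
  have hmap : Primrec fun p : ℕ × ℕ × ℕ × ℕ =>
      (List.range p.2.2.2).map (fun q => jvalf p.1 p.2.1 p.2.2.1 q) :=
    Primrec.list_map
      (Primrec.list_range.comp (Primrec.snd.comp (Primrec.snd.comp Primrec.snd)))
      jvalf_primrec₂
  exact lmem_primrec.comp hmap jvalf_primrec

/-! ### semantic facts about allHalt/collb -/

lemma allHalt_iff {e a i n : ℕ} :
    allHalt e a i n = true ↔ ∀ q ≤ n, (evopt e a i q).isSome = true := by
  unfold allHalt
  rw [lallSome_iff]
  constructor
  · intro hl q hq
    exact hl _ (List.mem_map_of_mem (List.mem_range.2 (Nat.lt_succ_of_le hq)))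
  · intro hl o ho
    obtain ⟨q, hq, rfl⟩ := List.mem_map.1 ho
    exact hl q (Nat.lt_succ_iff.1 (List.mem_range.1 hq))

lemma evopt_eq_some {e i q a J : ℕ} (hJ : J ∈ eval (ofNat Code e) (Nat.pair i q))
    (hs : (evopt e a i q).isSome = true) : evopt e a i q = some J := by
  obtain ⟨x, hx⟩ := Option.isSome_iff_exists.1 hs
  have hx' : x ∈ evaln a (ofNat Code e) (Nat.pair i q) := by
    rw [show evaln a (ofNat Code e) (Nat.pair i q) = evopt e a i q from rfl, hx]
    rfl
  have hxJ : x = J := Part.mem_unique (evaln_sound hx') hJ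
  rw [hx, hxJ]

lemma jvalf_eq {e i q a J : ℕ} (hJ : J ∈ eval (ofNat Code e) (Nat.pair i q))
    (hs : (evopt e a i q).isSome = true) : jvalf e a i q = J := by
  unfold jvalf
  rw [evopt_eq_some hJ hs]
  rfl

lemma collb_iff {e a i n : ℕ} {J : ℕ → ℕ} (hJ : ∀ q, J q ∈ eval (ofNat Code e) (Nat.pair i q))
    (hH : allHalt e a i n = true) :
    collb e a i n = true ↔ ∃ q < n, J q = J n := by
  have hs := allHalt_iff.1 hH
  have hv : ∀ q ≤ n, jvalf e a i q = J q := fun q hq => jvalf_eq (hJ q) (hs q hq)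
  unfold collb
  rw [lmem_iff]
  constructor
  · intro hm
    obtain ⟨q, hq, he⟩ := List.mem_map.1 hm
    have hqn := List.mem_range.1 hq
    exact ⟨q, hqn, (hv q (le_of_lt hqn)).symm.trans (he.trans (hv n le_rfl))⟩
  · rintro ⟨q, hq, he⟩
    refine List.mem_map.2 ⟨q, List.mem_range.2 hq, ?_⟩
    rw [hv q (le_of_lt hq), hv n le_rfl, he]

lemma exists_allHalt {e i n : ℕ} {J : ℕ → ℕ}
    (hJ : ∀ q, J q ∈ eval (ofNat Code e) (Nat.pair i q)) :
    ∃ a, 0 < a ∧ allHalt e a i n = true := by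
  have H : ∀ n : ℕ, ∃ a, ∀ q ≤ n, (evopt e a i q).isSome = true := by
    intro n
    induction n with
    | zero =>
      obtain ⟨k, hk⟩ := evaln_complete.1 (hJ 0)
      refine ⟨k, fun q hq => ?_⟩
      obtain rfl : q = 0 := Nat.le_zero.1 hq
      exact Option.isSome_iff_exists.2 ⟨J 0, Option.mem_def.1 hk⟩
    | succ n ihn =>
      obtain ⟨a, ha⟩ := ihn
      obtain ⟨k, hk⟩ := evaln_complete.1 (hJ (n + 1))
      refine ⟨max a k, fun q hq => ?_⟩
      by_cases hq' : q ≤ n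
      · obtain ⟨x, hx⟩ := Option.isSome_iff_exists.1 (ha q hq')
        have hx2 : x ∈ evaln (max a k) (ofNat Code e) (Nat.pair i q) :=
          evaln_mono (le_max_left a k) (Option.mem_def.2 hx)
        exact Option.isSome_iff_exists.2 ⟨x, Option.mem_def.1 hx2⟩
      · obtain rfl : q = n + 1 := by omega
        have hx2 : J (n + 1) ∈ evaln (max a k) (ofNat Code e) (Nat.pair i (n + 1)) :=
          evaln_mono (le_max_right a k) hk
        exact Option.isSome_iff_exists.2 ⟨_, Option.mem_def.1 hx2⟩
  obtain ⟨a, ha⟩ := H n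
  refine ⟨a + 1, Nat.succ_pos a, allHalt_iff.2 fun q hq => ?_⟩
  obtain ⟨x, hx⟩ := Option.isSome_iff_exists.1 (ha q hq)
  have hx2 : x ∈ evaln (a + 1) (ofNat Code e) (Nat.pair i q) :=
    evaln_mono (Nat.le_succ a) (Option.mem_def.2 hx)
  exact Option.isSome_iff_exists.2 ⟨x, Option.mem_def.1 hx2⟩

/-! ### the master enumeration -/

def master (h : ℕ → ℕ) (u m : ℕ) : ℕ :=
  bif m.unpair.1 == 0 then Nat.pair m.unpair.2 0
  else
    bif allHalt u.unpair.1 m.unpair.1 u.unpair.2.unpair.1 u.unpair.2.unpair.2 then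
      bif collb u.unpair.1 m.unpair.1 u.unpair.2.unpair.1 u.unpair.2.unpair.2 then
        bif u.unpair.2.unpair.2 % 2 == 1 then cstream 0 m.unpair.2
        else dstream h u.unpair.2.unpair.1 m.unpair.2
      else estream h u.unpair.2.unpair.1 m.unpair.2
    else Nat.pair m.unpair.2 0

lemma master_computable {h : ℕ → ℕ} (hc : Computable h) : Computable₂ (master h) := by
  have pe : Primrec fun p : ℕ × ℕ => p.1.unpair.1 :=
    Primrec.fst.comp (Primrec.unpair.comp Primrec.fst)
  have pi : Primrec fun p : ℕ × ℕ => p.1.unpair.2.unpair.1 :=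
    Primrec.fst.comp (Primrec.unpair.comp (Primrec.snd.comp (Primrec.unpair.comp Primrec.fst)))
  have pn : Primrec fun p : ℕ × ℕ => p.1.unpair.2.unpair.2 :=
    Primrec.snd.comp (Primrec.unpair.comp (Primrec.snd.comp (Primrec.unpair.comp Primrec.fst)))
  have pa : Primrec fun p : ℕ × ℕ => p.2.unpair.1 :=
    Primrec.fst.comp (Primrec.unpair.comp Primrec.snd)
  have pb : Primrec fun p : ℕ × ℕ => p.2.unpair.2 :=
    Primrec.snd.comp (Primrec.unpair.comp Primrec.snd)
  have fill : Computable fun p : ℕ × ℕ => Nat.pair p.2.unpair.2 0 :=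
    (Primrec₂.natPair.comp pb (Primrec.const 0)).to_comp
  have c1 : Computable fun p : ℕ × ℕ => (p.2.unpair.1 == 0) :=
    (Primrec.beq.comp pa (Primrec.const 0)).to_comp
  have c2 : Computable fun p : ℕ × ℕ =>
      allHalt p.1.unpair.1 p.2.unpair.1 p.1.unpair.2.unpair.1 p.1.unpair.2.unpair.2 :=
    (allHalt_primrec.comp (Primrec.pair pe (Primrec.pair pa (Primrec.pair pi pn)))).to_comp
  have c3 : Computable fun p : ℕ × ℕ =>
      collb p.1.unpair.1 p.2.unpair.1 p.1.unpair.2.unpair.1 p.1.unpair.2.unpair.2 :=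
    (collb_primrec.comp (Primrec.pair pe (Primrec.pair pa (Primrec.pair pi pn)))).to_comp
  have c4 : Computable fun p : ℕ × ℕ => (p.1.unpair.2.unpair.2 % 2 == 1) :=
    (Primrec.beq.comp (Primrec.nat_mod.comp pn (Primrec.const 2)) (Primrec.const 1)).to_comp
  have bC : Computable fun p : ℕ × ℕ => cstream 0 p.2.unpair.2 :=
    (cstream_primrec.comp (Primrec.const 0) pb).to_comp
  have bD : Computable fun p : ℕ × ℕ => dstream h p.1.unpair.2.unpair.1 p.2.unpair.2 :=
    (dstream_computable hc).comp pi.to_comp pb.to_comp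
  have bE : Computable fun p : ℕ × ℕ => estream h p.1.unpair.2.unpair.1 p.2.unpair.2 :=
    (estream_computable hc).comp pi.to_comp pb.to_comp
  exact Computable₂.mk
    (Computable.cond c1 fill
      (Computable.cond c2 (Computable.cond c3 (Computable.cond c4 bC bD) bE) fill))

lemma range_master (h : ℕ → ℕ) {e i n : ℕ} {J : ℕ → ℕ}
    (hJ : ∀ q, J q ∈ eval (ofNat Code e) (Nat.pair i q)) :
    Set.range (master h (Nat.pair e (Nat.pair i n))) =
      Set.range (bif decide (∃ q < n, J q = J n)
        then (bif n % 2 == 1 then cstream 0 else dstream h i)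
        else estream h i) ∪ filler := by
  ext t
  constructor
  · rintro ⟨m, rfl⟩
    unfold master
    simp only [Nat.unpair_pair]
    cases h0 : ((m.unpair.1 : ℕ) == 0)
    · rw [cond_false]
      cases hH : allHalt e m.unpair.1 i n
      · rw [cond_false]
        exact Or.inr ⟨m.unpair.2, rfl⟩
      · rw [cond_true]
        have hco := collb_iff hJ hH
        by_cases hcol : ∃ q < n, J q = J n
        · rw [show collb e m.unpair.1 i n = true from hco.2 hcol, decide_eq_true hcol]
          simp only [cond_true]
          cases hodd : (n % 2 == 1)
          · exact Or.inl ⟨m.unpair.2, rfl⟩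
          · exact Or.inl ⟨m.unpair.2, rfl⟩
        · have hcb : collb e m.unpair.1 i n = false := by
            cases hcb : collb e m.unpair.1 i n
            · rfl
            · exact absurd (hco.1 hcb) hcol
          rw [hcb, decide_eq_false hcol]
          simp only [cond_false]
          exact Or.inl ⟨m.unpair.2, rfl⟩
    · rw [cond_true]
      exact Or.inr ⟨m.unpair.2, rfl⟩
  · rintro (ht | ⟨y, rfl⟩)
    · obtain ⟨b, rfl⟩ := ht
      obtain ⟨a, ha0, hH⟩ := exists_allHalt (n := n) hJ
      refine ⟨Nat.pair a b, ?_⟩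
      unfold master
      simp only [Nat.unpair_pair]
      have h0 : ((a : ℕ) == 0) = false := by
        cases hb : ((a : ℕ) == 0)
        · rfl
        · exact absurd (eq_of_beq hb) (Nat.pos_iff_ne_zero.1 ha0)
      rw [h0]
      simp only [cond_false]
      rw [hH]
      simp only [cond_true]
      have hco := collb_iff hJ hH
      by_cases hcol : ∃ q < n, J q = J n
      · rw [show collb e a i n = true from hco.2 hcol, decide_eq_true hcol]
        simp only [cond_true]
        cases hodd : (n % 2 == 1) <;> rfl
      · have hcb : collb e a i n = false := by
          cases hcb : collb e a i n
          · rfl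
          · exact absurd (hco.1 hcb) hcol
        rw [hcb, decide_eq_false hcol]
        simp only [cond_false]
    · refine ⟨Nat.pair 0 y, ?_⟩
      unfold master
      simp [Nat.unpair_pair]

lemma range_master_nocoll {ψ : ℕ → ℕ →. ℕ} {h : ℕ → ℕ} (hh : Set.range h = UG ψ)
    {e i n : ℕ} {J : ℕ → ℕ} (hJ : ∀ q, J q ∈ eval (ofNat Code e) (Nat.pair i q))
    (hnc : ¬∃ q < n, J q = J n) :
    Set.range (master h (Nat.pair e (Nat.pair i n))) = graphE (ψ i) := by
  rw [range_master h hJ, decide_eq_false hnc, cond_false, range_estream hh i,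
    Set.union_eq_left.2 (filler_subset_graphE _)]

lemma range_master_odd (h : ℕ → ℕ) {e i n : ℕ} {J : ℕ → ℕ}
    (hJ : ∀ q, J q ∈ eval (ofNat Code e) (Nat.pair i q))
    (hcol : ∃ q < n, J q = J n) (hodd : n % 2 = 1) :
    Set.range (master h (Nat.pair e (Nat.pair i n))) = graphE (constf 0) := by
  rw [range_master h hJ, decide_eq_true hcol, cond_true, hodd,
    show ((1 : ℕ) == 1) = true from rfl, cond_true, range_cstream,
    Set.union_eq_left.2 (filler_subset_graphE _)]

lemma range_master_even {ψ : ℕ → ℕ →. ℕ} {h : ℕ → ℕ} (hh : Set.range h = UG ψ)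
    {e i n : ℕ} {J : ℕ → ℕ} (hJ : ∀ q, J q ∈ eval (ofNat Code e) (Nat.pair i q))
    (hcol : ∃ q < n, J q = J n) (heven : n % 2 = 0) :
    (ψ i = emptyf ∧ Set.range (master h (Nat.pair e (Nat.pair i n))) = graphE emptyf) ∨
      (∃ x z, ψ i x = Part.some z ∧
        Set.range (master h (Nat.pair e (Nat.pair i n))) = graphE (constf (z + 1))) := by
  have hmain : Set.range (master h (Nat.pair e (Nat.pair i n))) =
      Set.range (dstream h i) ∪ filler := by
    rw [range_master h hJ, decide_eq_true hcol, cond_true, heven,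
      show ((0 : ℕ) == 1) = false from rfl, cond_false]
  by_cases hex : ∃ n₀, isGP i (h n₀) = true
  · right
    have hn₀ := Nat.find_spec hex
    have hmin : ∀ m < Nat.find hex, isGP i (h m) = false := by
      intro m hm
      have := Nat.find_min hex hm
      cases hb : isGP i (h m)
      · rfl
      · exact absurd hb this
    obtain ⟨x, z, hz, he⟩ := hGP_decode hh hn₀
    refine ⟨x, z, hz, ?_⟩
    rw [hmain, range_dstream_some hn₀ hmin, he, Nat.unpair_pair, graphE_constf]
    exact Set.union_eq_left.2 Set.subset_union_left
  · left
    have hall : ∀ m, isGP i (h m) = false := by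
      intro m
      cases hb : isGP i (h m)
      · rfl
      · exact absurd ⟨m, hb⟩ hex
    have hpsi : ψ i = emptyf := by
      funext x
      rw [show emptyf x = Part.none from rfl, Part.eq_none_iff']
      intro hdom
      obtain ⟨n₀, hgp, _⟩ := exists_GP_of_some hh (Part.some_get hdom).symm
      rw [hall n₀] at hgp
      exact Bool.noConfusion hgp
    refine ⟨hpsi, ?_⟩
    rw [hmain, range_dstream_none hall, graphE_emptyf, Set.union_self]

end IsoAux

set_option maxHeartbeats 1000000

namespace IsoAux

open Nat.Partrec (Code)
open Nat.Partrec.Code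
open Encodable Denumerable

def newb (J : ℕ → ℕ → ℕ) (i n : ℕ) : Bool :=
  !(lmem ((List.range n).map (fun q => J i q)) (J i n))

lemma newb_iff {J : ℕ → ℕ → ℕ} {i n : ℕ} :
    newb J i n = true ↔ ∀ q < n, J i q ≠ J i n := by
  unfold newb
  cases hb : lmem ((List.range n).map fun q => J i q) (J i n)
  · constructor
    · intro _ q hq he
      have hmem := lmem_iff.2 (List.mem_map.2 ⟨q, List.mem_range.2 hq, he⟩)
      rw [hb] at hmem
      exact Bool.noConfusion hmem
    · intro _; rfl
  · constructor
    · intro ht; exact Bool.noConfusion ht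
    · intro hq
      obtain ⟨q, hqr, he⟩ := List.mem_map.1 (lmem_iff.1 hb)
      exact absurd he (hq q (List.mem_range.1 hqr))

lemma newb_computable {J : ℕ → ℕ → ℕ} (hJ : Computable₂ J) : Computable₂ (newb J) := by
  have hmap : Computable₂ fun (i n : ℕ) => (List.range n).map (fun q => J i q) :=
    computable_map_range hJ
  have h2 : Computable fun p : ℕ × ℕ =>
      lmem ((List.range p.2).map (fun q => J p.1 q)) (J p.1 p.2) :=
    lmem_primrec.to_comp.comp (hmap.comp Computable.fst Computable.snd)
      (hJ.comp Computable.fst Computable.snd)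
  refine Computable₂.mk ((Computable.cond h2 (Computable.const false)
    (Computable.const true)).of_eq fun p => ?_)
  cases hb : lmem ((List.range p.2).map fun q => J p.1 q) (J p.1 p.2) <;>
    · unfold newb
      rw [hb]
      rfl

def posf (nxt : ℕ × ℕ → ℕ) (i m : ℕ) : ℕ :=
  Nat.rec 0 (fun _ IH => IH + 1 + nxt (i, IH)) m

lemma posf_zero (nxt : ℕ × ℕ → ℕ) (i : ℕ) : posf nxt i 0 = 0 := rfl

lemma posf_succ (nxt : ℕ × ℕ → ℕ) (i m : ℕ) :
    posf nxt i (m + 1) = posf nxt i m + 1 + nxt (i, posf nxt i m) := rfl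

lemma posf_computable {nxt : ℕ × ℕ → ℕ} (hc : Computable nxt) : Computable₂ (posf nxt) := by
  have h := Computable.nat_rec (f := fun p : ℕ × ℕ => p.2)
      (g := fun _ : ℕ × ℕ => (0 : ℕ))
      (h := fun (p : ℕ × ℕ) (q : ℕ × ℕ) => q.2 + 1 + nxt (p.1, q.2))
      Computable.snd (Computable.const 0)
      ((Primrec.nat_add.to_comp.comp
        ((Primrec.succ.comp (Primrec.snd.comp Primrec.snd)).to_comp)
        (hc.comp (Computable.pair (Computable.fst.comp Computable.fst)
          (Computable.snd.comp Computable.snd)))).to₂)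
  exact Computable₂.mk h

theorem padding_ex {A : Set ℕ} {ψ : ℕ → ℕ →. ℕ} (hψ : QuasiGodel A ψ) :
    ∃ p : ℕ → ℕ → ℕ, Computable₂ p ∧ (∀ i n, ψ (p i n) = ψ i) ∧
      ∀ i, Function.Injective (p i) := by
  obtain ⟨hrange, ⟨h, hcomp, hh⟩, hq2⟩ := hψ
  have hh' : Set.range h = UG ψ := hh
  have hmem : ∀ i, ψ i ∈ SA A := fun i => hrange ▸ Set.mem_range_self i
  obtain ⟨v, hvcomp, hv⟩ := hq2 (master h) (master_computable hcomp)
  have hg : Computable₂ fun (cd : Code) (m : ℕ) => v (Nat.pair (encode cd) m) :=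
    Computable₂.mk (hvcomp.comp (Primrec₂.natPair.to_comp.comp
      (Computable.encode.comp Computable.fst) Computable.snd))
  have hf : Partrec₂ fun (cd : Code) (m : ℕ) =>
      (Part.some (v (Nat.pair (encode cd) m)) : Part ℕ) := hg
  obtain ⟨c, hc⟩ := fixed_point₂ hf
  -- the family J
  set J : ℕ → ℕ → ℕ := fun i q => v (Nat.pair (encode c) (Nat.pair i q)) with hJdef
  have hJ : ∀ i q, J i q ∈ eval (ofNat Code (encode c)) (Nat.pair i q) := by
    intro i q
    rw [ofNat_encode, hc]
    exact Part.mem_some _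
  have hvJ : ∀ i n (r : ℕ →. ℕ), r ∈ SA A →
      Set.range (master h (Nat.pair (encode c) (Nat.pair i n))) = graphE r →
      ψ (J i n) = r := by
    intro i n r hr hrg
    exact hv (Nat.pair (encode c) (Nat.pair i n)) r hr hrg
  -- main invariant
  have hP : ∀ i n, ψ (J i n) = ψ i := by
    intro i n
    induction n using Nat.strong_induction_on with
    | _ n IH =>
      by_cases hcol : ∃ q < n, J i q = J i n
      · obtain ⟨q, hq, he⟩ := hcol
        rw [← he]
        exact IH q hq
      · exact hvJ i n (ψ i) (hmem i) (range_master_nocoll hh' (hJ i) hcol)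
  have hOdd : ∀ i, ψ i ≠ constf 0 → ∀ n, n % 2 = 1 → ¬∃ q < n, J i q = J i n := by
    intro i hne n hodd hcol
    have h2 := hvJ i n (constf 0) (constf_mem_SA A 0)
      (range_master_odd h (hJ i) hcol hodd)
    rw [hP i n] at h2
    exact hne h2
  have hEven : ∀ i, ψ i ≠ emptyf → ∀ n, n % 2 = 0 → ¬∃ q < n, J i q = J i n := by
    intro i hne n heven hcol
    rcases range_master_even hh' (hJ i) hcol heven with ⟨hpsi, _⟩ | ⟨x, z, hz, hr⟩
    · exact hne hpsi
    · have h2 := hvJ i n (constf (z + 1)) (constf_mem_SA A (z + 1)) hr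
      rw [hP i n] at h2
      rw [h2] at hz
      have : z + 1 = z := by simpa [constf] using hz
      omega
  have hNew : ∀ i N, ∃ n, N ≤ n ∧ ∀ q < n, J i q ≠ J i n := by
    intro i N
    by_cases he : ψ i = emptyf
    · have hne : ψ i ≠ constf 0 := by
        rw [he]
        exact fun hcon => constf_ne_emptyf 0 hcon.symm
      refine ⟨2 * N + 1, by omega, fun q hq hqe => ?_⟩
      exact hOdd i hne (2 * N + 1) (by omega) ⟨q, hq, hqe⟩
    · refine ⟨2 * N, by omega, fun q hq hqe => ?_⟩
      exact hEven i he (2 * N) (by omega) ⟨q, hq, hqe⟩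
  have hJcomp : Computable₂ J :=
    Computable₂.mk (hvcomp.comp (Primrec₂.natPair.to_comp.comp
      (Computable.const (encode c))
      (Primrec₂.natPair.to_comp.comp Computable.fst Computable.snd)))
  -- the next-new-position function
  have hexN : ∀ p : ℕ × ℕ, ∃ t, newb J p.1 (p.2 + 1 + t) = true := by
    intro p
    obtain ⟨n, hn, hnew⟩ := hNew p.1 (p.2 + 1)
    refine ⟨n - (p.2 + 1), ?_⟩
    have he : p.2 + 1 + (n - (p.2 + 1)) = n := by omega
    rw [he]
    exact newb_iff.2 hnew
  have hq2c : Computable₂ fun (p : ℕ × ℕ) (t : ℕ) => newb J p.1 (p.2 + 1 + t) :=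
    Computable₂.mk ((newb_computable hJcomp).comp
      (Computable.fst.comp Computable.fst)
      ((Primrec.nat_add.comp (Primrec.succ.comp (Primrec.snd.comp Primrec.fst))
        Primrec.snd).to_comp))
  obtain ⟨nxt, hnxtc, hnxt⟩ := computable_find hq2c hexN
  have hposNew : ∀ i m, 0 < m → newb J i (posf nxt i m) = true := by
    intro i m hm
    cases m with
    | zero => omega
    | succ m =>
      rw [posf_succ]
      exact (hnxt (i, posf nxt i m)).1
  have hposMono : ∀ i, StrictMono (fun m => posf nxt i m) := by
    intro i
    apply strictMono_nat_of_lt_succ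
    intro m
    rw [posf_succ]
    omega
  refine ⟨fun i m => J i (posf nxt i m), ?_, ?_, ?_⟩
  · exact Computable₂.mk (hJcomp.comp Computable.fst
      ((posf_computable hnxtc).comp Computable.fst Computable.snd))
  · intro i n
    exact hP i _
  · intro i m m' he
    by_contra hne
    rcases Nat.lt_or_ge m m' with hlt | hge
    · exact newb_iff.1 (hposNew i m' (by omega)) _ (hposMono i hlt) he
    · have hlt : m' < m := by omega
      exact newb_iff.1 (hposNew i m (by omega)) _ (hposMono i hlt) he.symm

theorem reduce_ex {A : Set ℕ} {θ ψ : ℕ → ℕ →. ℕ}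
    (hθ : QuasiGodel A θ) (hψ : QuasiGodel A ψ) :
    ∃ t : ℕ → ℕ, Computable t ∧ ∀ i, ψ (t i) = θ i := by
  obtain ⟨hθrange, ⟨he, hec, heh⟩, _⟩ := hθ
  obtain ⟨_, _, hq2⟩ := hψ
  obtain ⟨v, hvc, hv⟩ := hq2 (estream he) (estream_computable hec)
  exact ⟨v, hvc, fun i =>
    hv i (θ i) (hθrange ▸ Set.mem_range_self i) (range_estream heh i)⟩

theorem fresh_ex {A : Set ℕ} {θ ψ : ℕ → ℕ →. ℕ}
    (hθ : QuasiGodel A θ) (hψ : QuasiGodel A ψ) :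
    ∃ fr : ℕ → List ℕ → ℕ, Computable₂ fr ∧
      ∀ i L, ψ (fr i L) = θ i ∧ fr i L ∉ L := by
  obtain ⟨t, htc, ht⟩ := reduce_ex hθ hψ
  obtain ⟨p, hpc, hpv, hpinj⟩ := padding_ex hψ
  have hex : ∀ a : ℕ × List ℕ, ∃ n, (!(lmem a.2 (p (t a.1) n))) = true := by
    intro a
    by_contra hno
    push_neg at hno
    have hsub : Set.range (p (t a.1)) ⊆ {x | x ∈ a.2} := by
      rintro x ⟨n, rfl⟩
      have h1 := hno n
      cases hb : lmem a.2 (p (t a.1) n)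
      · rw [hb] at h1
        exact absurd rfl h1
      · exact lmem_iff.1 hb
    exact (List.finite_toSet a.2).not_infinite
      (Set.Infinite.mono hsub (Set.infinite_range_of_injective (hpinj (t a.1))))
  have hqc : Computable₂ fun (a : ℕ × List ℕ) (n : ℕ) => (!(lmem a.2 (p (t a.1) n))) := by
    have hl : Computable fun pp : (ℕ × List ℕ) × ℕ => lmem pp.1.2 (p (t pp.1.1) pp.2) :=
      lmem_primrec.to_comp.comp (Computable.snd.comp Computable.fst)
        (hpc.comp (htc.comp (Computable.fst.comp Computable.fst)) Computable.snd)
    refine Computable₂.mk ((Computable.cond hl (Computable.const false)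
      (Computable.const true)).of_eq fun pp => ?_)
    cases hb : lmem pp.1.2 (p (t pp.1.1) pp.2) <;> rfl
  obtain ⟨F, hFc, hF⟩ := computable_find hqc hex
  refine ⟨fun i L => p (t i) (F (i, L)), ?_, fun i L => ⟨?_, ?_⟩⟩
  · exact Computable₂.mk (hpc.comp (htc.comp Computable.fst) hFc)
  · exact (hpv (t i) _).trans (ht i)
  · intro hmemL
    have h1 := (hF (i, L)).1
    rw [lmem_iff.2 hmemL] at h1
    exact Bool.noConfusion h1

end IsoAux

set_option maxHeartbeats 1000000

namespace IsoAux

def ext1 (fr : ℕ → List ℕ → ℕ) (n : ℕ) (σ : List (ℕ × ℕ)) : List (ℕ × ℕ) :=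
  bif lmem (σ.map Prod.fst) n then σ else (n, fr n (σ.map Prod.snd)) :: σ

def ext2 (fr : ℕ → List ℕ → ℕ) (n : ℕ) (σ : List (ℕ × ℕ)) : List (ℕ × ℕ) :=
  bif lmem (σ.map Prod.snd) n then σ else (fr n (σ.map Prod.fst), n) :: σ

def stateF (frψ frθ : ℕ → List ℕ → ℕ) (n : ℕ) : List (ℕ × ℕ) :=
  Nat.rec [] (fun y IH => ext2 frθ y (ext1 frψ y IH)) n

lemma mapfst_primrec : Primrec fun σ : List (ℕ × ℕ) => σ.map Prod.fst :=
  Primrec.list_map Primrec.id (Primrec.fst.comp Primrec.snd)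

lemma mapsnd_primrec : Primrec fun σ : List (ℕ × ℕ) => σ.map Prod.snd :=
  Primrec.list_map Primrec.id (Primrec.snd.comp Primrec.snd)

lemma ext1_computable {fr : ℕ → List ℕ → ℕ} (hf : Computable₂ fr) :
    Computable₂ (ext1 fr) := by
  have hc : Computable fun q : ℕ × List (ℕ × ℕ) => lmem (q.2.map Prod.fst) q.1 :=
    lmem_primrec.to_comp.comp (mapfst_primrec.to_comp.comp Computable.snd) Computable.fst
  have hcons : Computable fun q : ℕ × List (ℕ × ℕ) =>
      ((q.1, fr q.1 (q.2.map Prod.snd)) :: q.2 : List (ℕ × ℕ)) :=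
    Primrec.list_cons.to_comp.comp
      (Computable.pair Computable.fst
        (hf.comp Computable.fst (mapsnd_primrec.to_comp.comp Computable.snd)))
      Computable.snd
  exact Computable₂.mk (Computable.cond hc Computable.snd hcons)

lemma ext2_computable {fr : ℕ → List ℕ → ℕ} (hf : Computable₂ fr) :
    Computable₂ (ext2 fr) := by
  have hc : Computable fun q : ℕ × List (ℕ × ℕ) => lmem (q.2.map Prod.snd) q.1 :=
    lmem_primrec.to_comp.comp (mapsnd_primrec.to_comp.comp Computable.snd) Computable.fst
  have hcons : Computable fun q : ℕ × List (ℕ × ℕ) =>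
      ((fr q.1 (q.2.map Prod.fst), q.1) :: q.2 : List (ℕ × ℕ)) :=
    Primrec.list_cons.to_comp.comp
      (Computable.pair
        (hf.comp Computable.fst (mapfst_primrec.to_comp.comp Computable.snd))
        Computable.fst)
      Computable.snd
  exact Computable₂.mk (Computable.cond hc Computable.snd hcons)

lemma stateF_computable {frψ frθ : ℕ → List ℕ → ℕ}
    (h1 : Computable₂ frψ) (h2 : Computable₂ frθ) : Computable (stateF frψ frθ) := by
  have h := Computable.nat_rec (f := fun n : ℕ => n)
      (g := fun _ : ℕ => ([] : List (ℕ × ℕ)))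
      (h := fun (_ : ℕ) (q : ℕ × List (ℕ × ℕ)) => ext2 frθ q.1 (ext1 frψ q.1 q.2))
      Computable.id (Computable.const ([] : List (ℕ × ℕ)))
      (((ext2_computable h2).comp (Computable.fst.comp Computable.snd)
        ((ext1_computable h1).comp (Computable.fst.comp Computable.snd)
          (Computable.snd.comp Computable.snd))).to₂)
  exact h

lemma ext1_spec {θ ψ : ℕ → ℕ →. ℕ} {fr : ℕ → List ℕ → ℕ}
    (hfr : ∀ i L, ψ (fr i L) = θ i ∧ fr i L ∉ L) (n : ℕ) (σ : List (ℕ × ℕ))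
    (h1 : (σ.map Prod.fst).Nodup) (h2 : (σ.map Prod.snd).Nodup)
    (h3 : ∀ pr ∈ σ, θ pr.1 = ψ pr.2) :
    ((ext1 fr n σ).map Prod.fst).Nodup ∧ ((ext1 fr n σ).map Prod.snd).Nodup ∧
      (∀ pr ∈ ext1 fr n σ, θ pr.1 = ψ pr.2) ∧ (∀ x ∈ σ, x ∈ ext1 fr n σ) ∧
      n ∈ (ext1 fr n σ).map Prod.fst := by
  unfold ext1
  cases hb : lmem (σ.map Prod.fst) n
  · rw [cond_false]
    have hnotin : n ∉ σ.map Prod.fst := fun hmem => by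
      rw [lmem_iff.2 hmem] at hb
      exact Bool.noConfusion hb
    obtain ⟨hv, hni⟩ := hfr n (σ.map Prod.snd)
    refine ⟨?_, ?_, ?_, ?_, ?_⟩
    · rw [List.map_cons, List.nodup_cons]
      exact ⟨hnotin, h1⟩
    · rw [List.map_cons, List.nodup_cons]
      exact ⟨hni, h2⟩
    · intro pr hpr
      rcases List.mem_cons.1 hpr with rfl | hpr'
      · exact hv.symm
      · exact h3 pr hpr'
    · exact fun x hx => List.mem_cons.2 (Or.inr hx)
    · rw [List.map_cons]
      exact List.mem_cons.2 (Or.inl rfl)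
  · rw [cond_true]
    exact ⟨h1, h2, h3, fun x hx => hx, lmem_iff.1 hb⟩

lemma ext2_spec {θ ψ : ℕ → ℕ →. ℕ} {fr : ℕ → List ℕ → ℕ}
    (hfr : ∀ i L, θ (fr i L) = ψ i ∧ fr i L ∉ L) (n : ℕ) (σ : List (ℕ × ℕ))
    (h1 : (σ.map Prod.fst).Nodup) (h2 : (σ.map Prod.snd).Nodup)
    (h3 : ∀ pr ∈ σ, θ pr.1 = ψ pr.2) :
    ((ext2 fr n σ).map Prod.fst).Nodup ∧ ((ext2 fr n σ).map Prod.snd).Nodup ∧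
      (∀ pr ∈ ext2 fr n σ, θ pr.1 = ψ pr.2) ∧ (∀ x ∈ σ, x ∈ ext2 fr n σ) ∧
      n ∈ (ext2 fr n σ).map Prod.snd := by
  unfold ext2
  cases hb : lmem (σ.map Prod.snd) n
  · rw [cond_false]
    have hnotin : n ∉ σ.map Prod.snd := fun hmem => by
      rw [lmem_iff.2 hmem] at hb
      exact Bool.noConfusion hb
    obtain ⟨hv, hni⟩ := hfr n (σ.map Prod.fst)
    refine ⟨?_, ?_, ?_, ?_, ?_⟩
    · rw [List.map_cons, List.nodup_cons]
      exact ⟨hni, h1⟩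
    · rw [List.map_cons, List.nodup_cons]
      exact ⟨hnotin, h2⟩
    · intro pr hpr
      rcases List.mem_cons.1 hpr with rfl | hpr'
      · exact hv
      · exact h3 pr hpr'
    · exact fun x hx => List.mem_cons.2 (Or.inr hx)
    · rw [List.map_cons]
      exact List.mem_cons.2 (Or.inl rfl)
  · rw [cond_true]
    exact ⟨h1, h2, h3, fun x hx => hx, lmem_iff.1 hb⟩

theorem isomorphism_theorem' (A : Set ℕ)
    (θ ψ : ℕ → ℕ →. ℕ) (hθ : QuasiGodel A θ) (hψ : QuasiGodel A ψ) :
    ∃ g : ℕ → ℕ, Computable g ∧ Function.Bijective g ∧ ∀ i, θ i = ψ (g i) := by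
  obtain ⟨frψ, hfψc, hfrψ⟩ := fresh_ex hθ hψ
  obtain ⟨frθ, hfθc, hfrθ⟩ := fresh_ex hψ hθ
  have hfrθ' : ∀ i L, θ (frθ i L) = ψ i ∧ frθ i L ∉ L := hfrθ
  set S : ℕ → List (ℕ × ℕ) := stateF frψ frθ with hS
  have hInv : ∀ n, ((S n).map Prod.fst).Nodup ∧ ((S n).map Prod.snd).Nodup ∧
      ∀ pr ∈ S n, θ pr.1 = ψ pr.2 := by
    intro n
    induction n with
    | zero =>
      refine ⟨List.nodup_nil, List.nodup_nil, ?_⟩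
      intro pr hpr
      exact absurd hpr (List.not_mem_nil (a := pr))
    | succ n ih =>
      obtain ⟨h1, h2, h3⟩ := ih
      obtain ⟨a1, a2, a3, _, _⟩ := ext1_spec hfrψ n (S n) h1 h2 h3
      obtain ⟨b1, b2, b3, _, _⟩ := ext2_spec hfrθ' n (ext1 frψ n (S n)) a1 a2 a3
      exact ⟨b1, b2, b3⟩
  have hmono : ∀ n x, x ∈ S n → x ∈ S (n + 1) := by
    intro n x hx
    obtain ⟨h1, h2, h3⟩ := hInv n
    obtain ⟨a1, a2, a3, a4, _⟩ := ext1_spec hfrψ n (S n) h1 h2 h3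
    obtain ⟨_, _, _, b4, _⟩ := ext2_spec hfrθ' n (ext1 frψ n (S n)) a1 a2 a3
    exact b4 x (a4 x hx)
  have hmono' : ∀ m n, m ≤ n → ∀ x ∈ S m, x ∈ S n := by
    intro m n hmn
    induction n, hmn using Nat.le_induction with
    | base => exact fun x hx => hx
    | succ n _ ih => exact fun x hx => hmono n x (ih x hx)
  have hcovD : ∀ n, n ∈ (S (n + 1)).map Prod.fst := by
    intro n
    obtain ⟨h1, h2, h3⟩ := hInv n
    obtain ⟨a1, a2, a3, _, a5⟩ := ext1_spec hfrψ n (S n) h1 h2 h3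
    obtain ⟨_, _, _, b4, _⟩ := ext2_spec hfrθ' n (ext1 frψ n (S n)) a1 a2 a3
    obtain ⟨pr, hpr, hpr1⟩ := List.mem_map.1 a5
    exact List.mem_map.2 ⟨pr, b4 pr hpr, hpr1⟩
  have hcovR : ∀ n, n ∈ (S (n + 1)).map Prod.snd := by
    intro n
    obtain ⟨h1, h2, h3⟩ := hInv n
    obtain ⟨a1, a2, a3, _, _⟩ := ext1_spec hfrψ n (S n) h1 h2 h3
    obtain ⟨_, _, _, _, b5⟩ := ext2_spec hfrθ' n (ext1 frψ n (S n)) a1 a2 a3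
    exact b5
  have hgmem : ∀ i, (i, lookv (S (i + 1)) i) ∈ S (i + 1) := by
    intro i
    obtain ⟨pr, hpr, hx⟩ := List.mem_map.1 (hcovD i)
    have hpr2 : (i, pr.2) ∈ S (i + 1) := by
      have hpe : pr = (i, pr.2) := by rw [← hx]
      rw [← hpe]
      exact hpr
    have hl : lookv (S (i + 1)) i = pr.2 := lookv_eq (hInv (i + 1)).1 hpr2
    rw [hl]
    exact hpr2
  refine ⟨fun i => lookv (S (i + 1)) i, ?_, ⟨?_, ?_⟩, ?_⟩
  · exact lookv_primrec.to_comp.comp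
      ((stateF_computable hfψc hfθc).comp (Primrec.succ.to_comp)) Computable.id
  · -- injective
    intro i i' he
    have he' : lookv (S (i + 1)) i = lookv (S (i' + 1)) i' := he
    have h1 : (i, lookv (S (i + 1)) i) ∈ S (max i i' + 1) :=
      hmono' _ _ (by omega) _ (hgmem i)
    have h2 : (i', lookv (S (i + 1)) i) ∈ S (max i i' + 1) := by
      rw [he']
      exact hmono' _ _ (by omega) _ (hgmem i')
    exact val_unique (hInv (max i i' + 1)).2.1 h1 h2
  · -- surjective
    intro y
    obtain ⟨pr, hpr, hx⟩ := List.mem_map.1 (hcovR y)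
    refine ⟨pr.1, ?_⟩
    show lookv (S (pr.1 + 1)) pr.1 = y
    have hpr2 : (pr.1, y) ∈ S (y + 1) := by
      have hpe : pr = (pr.1, y) := by rw [← hx]
      rw [← hpe]
      exact hpr
    have h1 : (pr.1, lookv (S (pr.1 + 1)) pr.1) ∈ S (max pr.1 y + 1) :=
      hmono' _ _ (by omega) _ (hgmem pr.1)
    have h2 : (pr.1, y) ∈ S (max pr.1 y + 1) := hmono' _ _ (by omega) _ hpr2
    exact key_unique (hInv (max pr.1 y + 1)).1 h1 h2
  · -- commutation
    intro i
    exact (hInv (i + 1)).2.2 _ (hgmem i)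

end IsoAux

/-- Isomorphism Theorem: any two quasi-Gödel numberings of `SA A` are computably
isomorphic. -/
theorem isomorphism_theorem (A : Set ℕ) (hAinf : A.Infinite) (hAce : CEset A)
    (θ ψ : ℕ → ℕ →. ℕ) (hθ : QuasiGodel A θ) (hψ : QuasiGodel A ψ) :
    ∃ g : ℕ → ℕ, Computable g ∧ Function.Bijective g ∧ ∀ i, θ i = ψ (g i) :=
  IsoAux.isomorphism_theorem' A θ ψ hθ hψ
end

section
/- (Completeness of quasi-Gödel numberings) Let A ⊆ ℕ be an infinite computably enumerable set and let θ be a quasi-Gödel numbering of S_A. Then θ is complete with the nowhere-defined function as distinguished element: for every unary partial recursive function p : ℕ →. ℕ there exists a total computable g : ℕ → ℕ such that for all i: if p i = Part.some j for some j then θ (g i) = θ j, and if p i is undefined then θ (g i) is the nowhere-defined function (θ (g i) x is undefined for every x). -/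
open Nat.Partrec.Code in
/-- Completeness of quasi-Gödel numberings, with the nowhere-defined function as
distinguished element. -/
theorem quasiGodel_complete (A : Set ℕ) (hAinf : A.Infinite) (hAce : CEset A)
    (θ : ℕ → ℕ →. ℕ) (hθ : QuasiGodel A θ)
    (p : ℕ →. ℕ) (hp : Partrec p) :
    ∃ g : ℕ → ℕ, Computable g ∧ ∀ i,
      (∀ j, p i = Part.some j → θ (g i) = θ j) ∧
      (¬ (p i).Dom → ∀ x, ¬ (θ (g i) x).Dom) := by
  classical
  obtain ⟨hrange, ⟨h, hcomp, hrangeh⟩, hqgn2⟩ := hθ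
  obtain ⟨cp, hcp⟩ := Nat.Partrec.Code.exists_code.1 (Partrec.nat_iff.1 hp)
  have h0 : ∀ n, evaln 0 cp n = none := fun n =>
    Option.eq_none_iff_forall_not_mem.2 fun a ha => Nat.not_lt_zero _ (evaln_bound ha)
  set k : ℕ → ℕ → ℕ := fun i m =>
    Option.casesOn (evaln m.unpair.1 cp i) (Nat.pair m.unpair.2 0)
      (fun j =>
        if (h m.unpair.2).unpair.2 = 0 ∨ ¬ (h m.unpair.2).unpair.1.unpair.1 = j
        then Nat.pair 0 0
        else Nat.pair (h m.unpair.2).unpair.1.unpair.2 (h m.unpair.2).unpair.2) with hkdef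
  have hkcomp : Computable₂ k := by
    have hG : Primrec (fun t : ℕ × ℕ × ℕ =>
        @Option.casesOn ℕ (fun _ => ℕ) (evaln t.2.1.unpair.1 cp t.1) (Nat.pair t.2.1.unpair.2 0)
          (fun j => if t.2.2.unpair.2 = 0 ∨ ¬ t.2.2.unpair.1.unpair.1 = j then Nat.pair 0 0
            else Nat.pair t.2.2.unpair.1.unpair.2 t.2.2.unpair.2)) := by
      have hu1 : Primrec fun t : ℕ × ℕ × ℕ => t.2.1.unpair.1 :=
        Primrec.fst.comp (Primrec.unpair.comp (Primrec.fst.comp Primrec.snd))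
      have hu2 : Primrec fun t : ℕ × ℕ × ℕ => t.2.1.unpair.2 :=
        Primrec.snd.comp (Primrec.unpair.comp (Primrec.fst.comp Primrec.snd))
      have hw : Primrec fun t : ℕ × ℕ × ℕ => t.2.2 := Primrec.snd.comp Primrec.snd
      apply Primrec.option_casesOn
      · exact primrec_evaln.comp ((hu1.pair (Primrec.const cp)).pair Primrec.fst)
      · exact Primrec₂.natPair.comp hu2 (Primrec.const 0)
      · apply Primrec.ite
        · apply PrimrecPred.or
          · exact PrimrecRel.comp Primrec.eq
              (Primrec.snd.comp (Primrec.unpair.comp (hw.comp Primrec.fst)))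
              (Primrec.const 0)
          · apply PrimrecPred.not
            exact PrimrecRel.comp Primrec.eq
              (Primrec.fst.comp (Primrec.unpair.comp
                (Primrec.fst.comp (Primrec.unpair.comp (hw.comp Primrec.fst)))))
              Primrec.snd
        · exact Primrec.const (Nat.pair 0 0)
        · exact Primrec₂.natPair.comp
            (Primrec.snd.comp (Primrec.unpair.comp
              (Primrec.fst.comp (Primrec.unpair.comp (hw.comp Primrec.fst)))))
            (Primrec.snd.comp (Primrec.unpair.comp (hw.comp Primrec.fst)))
    have hpre : Computable fun a : ℕ × ℕ => (a.1, a.2, h a.2.unpair.2) :=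
      Computable.fst.pair (Computable.snd.pair
        (hcomp.comp (Primrec.snd.comp (Primrec.unpair.comp Primrec.snd)).to_comp))
    exact (hG.to_comp.comp hpre : _)
  obtain ⟨v, hvcomp, hv⟩ := hqgn2 k hkcomp
  refine ⟨v, hvcomp, fun i => ⟨?_, ?_⟩⟩
  · intro j hpij
    have hθj : θ j ∈ SA A := hrange ▸ Set.mem_range_self j
    apply hv i (θ j) hθj
    have hevj : ∀ s j', evaln s cp i = some j' → j' = j := by
      intro s j' hs
      have hm : j' ∈ Nat.Partrec.Code.eval cp i := evaln_sound hs
      rw [hcp, hpij] at hm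
      exact Part.mem_some_iff.1 hm
    ext n
    simp only [graphE, Set.mem_union, Set.mem_setOf_eq, Set.mem_range]
    constructor
    · rintro ⟨m, rfl⟩
      rcases heq : evaln m.unpair.1 cp i with _ | j'
      · exact Or.inl ⟨m.unpair.2, by simp [hkdef, heq]⟩
      · obtain rfl := hevj _ _ heq
        by_cases hc : (h m.unpair.2).unpair.2 = 0 ∨ ¬ (h m.unpair.2).unpair.1.unpair.1 = j'
        · exact Or.inl ⟨0, by simp [hkdef, heq, hc]⟩
        · push_neg at hc
          obtain ⟨hne, hfst⟩ := hc
          have hmem : h m.unpair.2 ∈ Set.range h := Set.mem_range_self _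
          rw [hrangeh] at hmem
          rcases hmem with ⟨w, hw⟩ | ⟨i', x, z, hθ', hw⟩
          · exact absurd (by rw [hw]; simp) hne
          · have hi' : i' = j' := by rw [hw] at hfst; simpa using hfst
            subst hi'
            refine Or.inr ⟨x, z, hθ', ?_⟩
            simp [hkdef, heq, hw]
    · rintro (⟨y, rfl⟩ | ⟨x, z, hxz, rfl⟩)
      · exact ⟨Nat.pair 0 y, by simp [hkdef, h0]⟩
      · have hmem : Nat.pair (Nat.pair j x) (z + 1) ∈ Set.range h := by
          rw [hrangeh]; exact Or.inr ⟨j, x, z, hxz, rfl⟩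
        obtain ⟨m2, hm2⟩ := hmem
        have : j ∈ Nat.Partrec.Code.eval cp i := by
          rw [hcp, hpij]; exact Part.mem_some j
        obtain ⟨s, hs⟩ := evaln_complete.1 this
        refine ⟨Nat.pair s m2, ?_⟩
        rw [Option.mem_def] at hs
        simp [hkdef, hs, hm2]
  · intro hnd x
    have hbot : (fun _ : ℕ => Part.none) ∈ SA A := by
      right; left
      ext y; simp
    have hne : ∀ s, evaln s cp i = none := by
      intro s
      refine Option.eq_none_iff_forall_not_mem.2 fun a ha => hnd ?_
      have := evaln_sound ha
      rw [hcp] at this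
      exact Part.dom_iff_mem.2 ⟨a, this⟩
    have heq : θ (v i) = fun _ => Part.none := by
      apply hv i _ hbot
      ext n
      simp only [graphE, Set.mem_union, Set.mem_setOf_eq, Set.mem_range]
      constructor
      · rintro ⟨m, rfl⟩
        exact Or.inl ⟨m.unpair.2, by simp [hkdef, hne]⟩
      · rintro (⟨y, rfl⟩ | ⟨x', z, hxz, rfl⟩)
        · exact ⟨Nat.pair 0 y, by simp [hkdef, h0]⟩
        · exact absurd hxz (by simp)
    rw [heq]
    simp
end
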